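/- arXiv:0806.3559 — 4 statements merged into one kernel-verified Lean document; each statement's English description precedes it below -/
import Mathlib

section
/- Let Ω be a nonempty countable set equipped with the σ-algebra of all subsets, let ρ be a probability measure on Ω, and let μ = ⊗ρ be the infinite product measure on Ω^ℕ (with the product σ-algebra). Then the set of simply normal sequences, i.e. the set of w = (a_i)_{i∈ℕ} ∈ Ω^ℕ such that for every r ∈ Ω the relative frequency (1/n)·#{i : 1 ≤ i ≤ n, a_i = r} converges to ρ({r}) as n → ∞, has μ-measure 1. -/
open MeasureTheory Filter

lemma coord_map_aux {Ω : Type*} [MeasurableSpace Ω]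
    (ρ : Measure Ω) [IsProbabilityMeasure ρ]
    (μ : Measure (ℕ → Ω))
    (hμ : ∀ n : ℕ, Measure.map (fun w (i : Fin n) => w (i : ℕ)) μ
        = Measure.pi (fun _ : Fin n => ρ))
    (i : ℕ) {s : Set Ω} (hs : MeasurableSet s) :
    μ ((fun w : ℕ → Ω => w i) ⁻¹' s) = ρ s := by
  set n := i + 1
  have hi : i < n := Nat.lt_succ_self i
  set i' : Fin n := ⟨i, hi⟩
  have hproj : Measurable (fun w : ℕ → Ω => fun k : Fin n => w (k : ℕ)) :=
    measurable_pi_lambda _ fun k => measurable_pi_apply _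
  have hA : MeasurableSet ((fun x : Fin n → Ω => x i') ⁻¹' s) :=
    (measurable_pi_apply i') hs
  have h1 : ((fun w : ℕ → Ω => w i) ⁻¹' s)
      = (fun w : ℕ → Ω => fun k : Fin n => w (k : ℕ)) ⁻¹' ((fun x : Fin n → Ω => x i') ⁻¹' s) :=
    rfl
  rw [h1, ← Measure.map_apply hproj hA, hμ n]
  have h2 : ((fun x : Fin n → Ω => x i') ⁻¹' s)
      = Set.pi Set.univ (fun k : Fin n => if k = i' then s else Set.univ) := by
    ext x
    simp only [Set.mem_preimage, Set.mem_pi, Set.mem_univ, true_implies]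
    constructor
    · intro h k; split_ifs with hk
      · subst hk; exact h
      · trivial
    · intro h; have := h i'; simpa using this
  rw [h2, Measure.pi_pi]
  simp [apply_ite ρ, measure_univ, Finset.prod_ite_eq']

lemma coord_pair_aux {Ω : Type*} [MeasurableSpace Ω]
    (ρ : Measure Ω) [IsProbabilityMeasure ρ]
    (μ : Measure (ℕ → Ω))
    (hμ : ∀ n : ℕ, Measure.map (fun w (i : Fin n) => w (i : ℕ)) μ
        = Measure.pi (fun _ : Fin n => ρ))
    {i j : ℕ} (hij : i ≠ j) {s t : Set Ω} (hs : MeasurableSet s) (ht : MeasurableSet t) :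
    μ ((fun w : ℕ → Ω => w i) ⁻¹' s ∩ (fun w : ℕ → Ω => w j) ⁻¹' t) = ρ s * ρ t := by
  set n := max i j + 1 with hn
  have hi : i < n := Nat.lt_succ_of_le (le_max_left i j)
  have hj : j < n := Nat.lt_succ_of_le (le_max_right i j)
  set i' : Fin n := ⟨i, hi⟩
  set j' : Fin n := ⟨j, hj⟩
  have hij' : i' ≠ j' := fun h => hij (congrArg Fin.val h)
  have hproj : Measurable (fun w : ℕ → Ω => fun k : Fin n => w (k : ℕ)) :=
    measurable_pi_lambda _ fun k => measurable_pi_apply _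
  set A : Set (Fin n → Ω) := (fun x : Fin n → Ω => x i') ⁻¹' s ∩ (fun x : Fin n → Ω => x j') ⁻¹' t
    with hA_def
  have hA : MeasurableSet A :=
    ((measurable_pi_apply i') hs).inter ((measurable_pi_apply j') ht)
  have h1 : ((fun w : ℕ → Ω => w i) ⁻¹' s ∩ (fun w : ℕ → Ω => w j) ⁻¹' t)
      = (fun w : ℕ → Ω => fun k : Fin n => w (k : ℕ)) ⁻¹' A := rfl
  rw [h1, ← Measure.map_apply hproj hA, hμ n]
  set F : Fin n → Set Ω := fun k => if k = i' then s else if k = j' then t else Set.univ with hF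
  have h2 : A = Set.pi Set.univ F := by
    ext x
    simp only [hA_def, hF, Set.mem_inter_iff, Set.mem_preimage, Set.mem_pi, Set.mem_univ,
      true_implies]
    constructor
    · rintro ⟨h1, h2⟩ k
      split_ifs with hk1 hk2
      · subst hk1; exact h1
      · subst hk2; exact h2
      · trivial
    · intro h
      refine ⟨?_, ?_⟩
      · have := h i'; simpa using this
      · have := h j'; simpa [hij'.symm] using this
  rw [h2, Measure.pi_pi]
  have key : ∀ k : Fin n, ρ (F k) = if k = i' then ρ s else if k = j' then ρ t else 1 := by
    intro k
    simp only [hF]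
    split_ifs <;> simp
  calc ∏ k, ρ (F k) = ∏ k, (if k = i' then ρ s else if k = j' then ρ t else 1) := by
        exact Finset.prod_congr rfl fun k _ => key k
    _ = ρ s * ρ t := by
        rw [← Finset.mul_prod_erase Finset.univ _ (Finset.mem_univ i')]
        rw [← Finset.mul_prod_erase _ _
          (Finset.mem_erase.mpr ⟨hij'.symm, Finset.mem_univ j'⟩)]
        have hrest : (∏ k ∈ (Finset.univ.erase i').erase j',
            (if k = i' then ρ s else if k = j' then ρ t else 1)) = 1 := by
          refine Finset.prod_eq_one fun k hk => ?_
          simp only [Finset.mem_erase] at hk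
          rw [if_neg hk.2.1, if_neg hk.1]
        rw [hrest, mul_one, if_pos rfl, if_neg hij'.symm, if_pos rfl]

/-- Let `Ω` be a nonempty countable set equipped with the σ-algebra of all
subsets, let `ρ` be a probability measure on `Ω`, and let `μ = ⊗ρ` be the infinite product
measure on `Ω^ℕ` (characterized by its finite-dimensional marginals being the finite
product measures `ρ^n`).  Then the set of simply normal sequences has `μ`-measure `1`. -/
theorem simply_normal_full_measure
    {Ω : Type*} [Nonempty Ω] [Countable Ω] [m : MeasurableSpace Ω] (hm : m = ⊤)
    (ρ : Measure Ω) [IsProbabilityMeasure ρ]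
    (μ : Measure (ℕ → Ω)) [IsProbabilityMeasure μ]
    (hμ : ∀ n : ℕ, Measure.map (fun w (i : Fin n) => w (i : ℕ)) μ
        = Measure.pi (fun _ : Fin n => ρ)) :
    μ {w : ℕ → Ω | ∀ r : Ω,
        Tendsto (fun n : ℕ => (({i | i < n ∧ w i = r} : Set ℕ).ncard : ℝ) / n)
          atTop (nhds (ρ {r}).toReal)} = 1 := by
  classical
  have hsing : ∀ s : Set Ω, MeasurableSet s := fun s =>
    hm ▸ (MeasurableSpace.measurableSet_top : MeasurableSet[⊤] s)
  have key : ∀ r : Ω, ∀ᵐ w ∂μ,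
      Tendsto (fun n : ℕ => (({i | i < n ∧ w i = r} : Set ℕ).ncard : ℝ) / n)
        atTop (nhds (ρ {r}).toReal) := by
    intro r
    set g : Ω → ℝ := Set.indicator {r} (fun _ => 1) with hg_def
    have hg : Measurable g := measurable_const.indicator (hsing _)
    set X : ℕ → (ℕ → Ω) → ℝ := fun i w => g (w i) with hX
    have hXmeas : ∀ i, Measurable (X i) := fun i => hg.comp (measurable_pi_apply i)
    have hint : Integrable (X 0) μ := by
      have hXind : X 0 = Set.indicator ((fun w : ℕ → Ω => w 0) ⁻¹' {r}) (fun _ => (1:ℝ)) := by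
        ext w; simp [hX, hg_def, Set.indicator_apply, Pi.single_apply]
      rw [hXind]
      exact (integrable_const (1:ℝ)).indicator ((measurable_pi_apply 0) (hsing _))
    have hindep : Pairwise (Function.onFun (ProbabilityTheory.IndepFun · · μ) X) := by
      intro i j hij
      simp only [Function.onFun]
      rw [ProbabilityTheory.indepFun_iff_measure_inter_preimage_eq_mul]
      intro s t _ _
      have h1 : X i ⁻¹' s = (fun w : ℕ → Ω => w i) ⁻¹' (g ⁻¹' s) := rfl
      have h2 : X j ⁻¹' t = (fun w : ℕ → Ω => w j) ⁻¹' (g ⁻¹' t) := rfl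
      rw [h1, h2, coord_pair_aux ρ μ hμ hij (hsing _) (hsing _),
        coord_map_aux ρ μ hμ i (hsing _), coord_map_aux ρ μ hμ j (hsing _)]
    have hcoord : ∀ i : ℕ, Measure.map (fun w : ℕ → Ω => w i) μ = ρ := by
      intro i
      ext s hs
      rw [Measure.map_apply (measurable_pi_apply i) hs, coord_map_aux ρ μ hμ i hs]
    have hmap : ∀ i, Measure.map (X i) μ = Measure.map g ρ := by
      intro i
      have h : X i = g ∘ (fun w : ℕ → Ω => w i) := rfl
      rw [h, ← Measure.map_map hg (measurable_pi_apply i), hcoord i]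
    have hident : ∀ i, ProbabilityTheory.IdentDistrib (X i) (X 0) μ μ :=
      fun i => ⟨(hXmeas i).aemeasurable, (hXmeas 0).aemeasurable, by rw [hmap i, hmap 0]⟩
    have hsl := ProbabilityTheory.strong_law_ae_real X hint hindep hident
    have hEX : (∫ x, X 0 x ∂μ) = (ρ {r}).toReal := by
      calc (∫ x, X 0 x ∂μ) = ∫ x, g x ∂(Measure.map (fun w : ℕ → Ω => w 0) μ) :=
            (integral_map (μ := μ) (φ := fun w : ℕ → Ω => w 0) (f := g)
              (measurable_pi_apply 0).aemeasurable hg.aestronglyMeasurable).symm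
        _ = ∫ x, g x ∂ρ := by rw [hcoord 0]
        _ = (ρ {r}).toReal := by
            rw [hg_def, integral_indicator_const (1:ℝ) (hsing {r})]; simp [Measure.real]
    rw [hEX] at hsl
    filter_upwards [hsl] with w hw
    have hco : ∀ n : ℕ, (∑ i ∈ Finset.range n, X i w)
        = (({i | i < n ∧ w i = r} : Set ℕ).ncard : ℝ) := by
      intro n
      have hset : ({i | i < n ∧ w i = r} : Set ℕ)
          = ↑((Finset.range n).filter fun i => w i = r) := by
        ext k; simp [Finset.mem_filter]
      rw [hset, Set.ncard_coe_finset]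
      have hsum : (∑ i ∈ Finset.range n, X i w)
          = ∑ i ∈ Finset.range n, (if w i = r then (1:ℝ) else 0) :=
        Finset.sum_congr rfl fun i _ => by simp [hX, hg_def, Set.indicator_apply, Pi.single_apply]
      rw [hsum, Finset.sum_boole]
    exact Tendsto.congr (fun n => by rw [hco n]) hw
  have hall : ∀ᵐ w ∂μ, ∀ r : Ω,
      Tendsto (fun n : ℕ => (({i | i < n ∧ w i = r} : Set ℕ).ncard : ℝ) / n)
        atTop (nhds (ρ {r}).toReal) := ae_all_iff.mpr key
  set S := {w : ℕ → Ω | ∀ r : Ω,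
      Tendsto (fun n : ℕ => (({i | i < n ∧ w i = r} : Set ℕ).ncard : ℝ) / n)
        atTop (nhds (ρ {r}).toReal)} with hS
  have hc : μ Sᶜ = 0 := by
    have := ae_iff.mp hall
    simpa [hS, Set.compl_setOf] using this
  refine le_antisymm prob_le_one ?_
  calc (1 : ENNReal) = μ Set.univ := measure_univ.symm
    _ ≤ μ S + μ Sᶜ := by rw [← Set.union_compl_self S]; exact measure_union_le _ _
    _ = μ S := by rw [hc, add_zero]
end

section
/- Let Ω be a nonempty countable set equipped with the σ-algebra of all subsets, let ρ be a probability measure on Ω, and let μ = ⊗ρ be the infinite product measure on Ω^ℕ (with the product σ-algebra). Then the set of normal sequences, i.e. the set of w = (a_i)_{i∈ℕ} ∈ Ω^ℕ such that for every k ∈ ℕ and every word B_k = b_1…b_k ∈ Ω^k the relative frequency (1/n)·#{i : 1 ≤ i ≤ n, a_{i+j-1} = b_j for all j = 1,…,k} converges to ∏_{j=1}^k ρ({b_j}) as n → ∞, has μ-measure 1. -/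
open MeasureTheory Filter Finset ProbabilityTheory


lemma my_ceil_div {k : ℕ} (hk : 0 < k) (x m : ℕ) : m < (x + k - 1)/k ↔ k*m < x := by
  rw [Nat.lt_iff_add_one_le, Nat.le_div_iff_mul_le hk, add_mul, one_mul, mul_comm m k]
  generalize k*m = a
  omega

lemma my_regroup (k : ℕ) (hk : 0 < k) (u : ℕ → ℝ) (n : ℕ) :
    ∑ i ∈ range n, u i
      = ∑ r ∈ range k, ∑ m ∈ range ((n - r + k - 1)/k), u (r + k*m) := by
  rw [Finset.sum_sigma']
  refine Finset.sum_nbij' (fun a => ⟨a % k, a / k⟩) (fun p => p.1 + k * p.2) ?_ ?_ ?_ ?_ ?_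
  · intro a ha
    rw [Finset.mem_sigma, mem_range, mem_range, my_ceil_div hk]
    dsimp only
    have h1 := Nat.mod_add_div a k
    have h2 := Nat.mod_lt a hk
    rw [mem_range] at ha
    omega
  · intro p hp
    rw [Finset.mem_sigma, mem_range, mem_range, my_ceil_div hk] at hp
    rw [mem_range]
    omega
  · intro a ha
    dsimp only
    have h1 := Nat.mod_add_div a k
    omega
  · intro p hp
    rw [Finset.mem_sigma, mem_range, mem_range] at hp
    ext
    · dsimp only
      rw [Nat.add_mul_mod_self_left, Nat.mod_eq_of_lt hp.1]
    · dsimp only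
      rw [Nat.add_mul_div_left _ _ hk, Nat.div_eq_of_lt hp.1, Nat.zero_add]
  · intro a ha
    dsimp only
    congr 1
    have h1 := Nat.mod_add_div a k
    omega


lemma my_c_bounds (k r n : ℕ) (hk : 0 < k) :
    n - r ≤ k * ((n - r + k - 1)/k) ∧ k * ((n - r + k - 1)/k) ≤ n - r + k - 1 := by
  have h := Nat.div_add_mod (n - r + k - 1) k
  have h2 : (n - r + k - 1) % k < k := Nat.mod_lt _ hk
  omega

lemma my_c_atTop (k r : ℕ) (hk : 0 < k) :
    Tendsto (fun n : ℕ => (n - r + k - 1)/k) atTop atTop := by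
  rw [tendsto_atTop_atTop]
  intro b
  refine ⟨k*b + r, fun n hn => ?_⟩
  have h1 := (my_c_bounds k r n hk).1
  have h3 : k * b ≤ k * ((n - r + k - 1)/k) := by omega
  exact Nat.le_of_mul_le_mul_left h3 hk

lemma my_c_tendsto (k r : ℕ) (hk : 0 < k) :
    Tendsto (fun n : ℕ => (((n - r + k - 1)/k : ℕ) : ℝ) / n) atTop (nhds (1/(k:ℝ))) := by
  have hkR : (0:ℝ) < k := by exact_mod_cast hk
  have hk1 : (1:ℝ) ≤ k := by exact_mod_cast hk
  have hb : Tendsto (fun n : ℕ => ((r:ℝ)+k)/n) atTop (nhds 0) :=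
    Tendsto.div_atTop tendsto_const_nhds tendsto_natCast_atTop_atTop
  have hlow : Tendsto (fun n : ℕ => 1/(k:ℝ) - ((r:ℝ)+k)/n) atTop (nhds (1/(k:ℝ))) := by
    simpa using tendsto_const_nhds.sub hb
  have hup : Tendsto (fun n : ℕ => 1/(k:ℝ) + ((r:ℝ)+k)/n) atTop (nhds (1/(k:ℝ))) := by
    simpa using tendsto_const_nhds.add hb
  refine tendsto_of_tendsto_of_tendsto_of_le_of_le' hlow hup ?_ ?_
  · filter_upwards [eventually_ge_atTop 1] with n hn
    have hnR : (0:ℝ) < n := by exact_mod_cast hn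
    have h1 := (my_c_bounds k r n hk).1
    have key : (n:ℝ) ≤ k * ((n - r + k - 1)/k : ℕ) + r := by
      exact_mod_cast (by omega : n ≤ k * ((n - r + k - 1)/k) + r)
    have hcnn : (0:ℝ) ≤ ((n - r + k - 1)/k : ℕ) := Nat.cast_nonneg _
    have hrnn : (0:ℝ) ≤ r := Nat.cast_nonneg _
    rw [sub_le_iff_le_add, ← add_div, div_le_div_iff₀ hkR hnR]
    nlinarith [key, hcnn, hnR, hkR, hk1, hrnn,
      mul_nonneg hrnn (sub_nonneg.mpr hk1)]
  · filter_upwards [eventually_ge_atTop 1] with n hn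
    have hnR : (0:ℝ) < n := by exact_mod_cast hn
    have h1 := (my_c_bounds k r n hk).2
    have key : (k:ℝ) * ((n - r + k - 1)/k : ℕ) ≤ n + k := by
      exact_mod_cast (by omega : k * ((n - r + k - 1)/k) ≤ n + k)
    have hrnn : (0:ℝ) ≤ r := Nat.cast_nonneg _
    rw [div_add_div _ _ (ne_of_gt hkR) (ne_of_gt hnR), div_le_div_iff₀ hnR (by positivity)]
    nlinarith [mul_le_mul_of_nonneg_right key hnR.le, hnR, hkR, hk1, hrnn,
      mul_nonneg (mul_nonneg hrnn hkR.le) hnR.le,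
      mul_nonneg (mul_nonneg (sub_nonneg.mpr hk1) hkR.le) hnR.le]

lemma my_limit (k : ℕ) (hk : 0 < k) (u : ℕ → ℝ) (p : ℝ)
    (h : ∀ r, r < k →
      Tendsto (fun M : ℕ => (∑ m ∈ range M, u (r + k*m)) / M) atTop (nhds p)) :
    Tendsto (fun n : ℕ => (∑ i ∈ range n, u i) / n) atTop (nhds p) := by
  have key : (fun n : ℕ => (∑ i ∈ range n, u i) / n)
      = fun n : ℕ => ∑ r ∈ range k,
          ((((n - r + k - 1)/k : ℕ) : ℝ)/n)
            * ((∑ m ∈ range ((n - r + k - 1)/k), u (r + k*m)) / ((n - r + k - 1)/k : ℕ)) := by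
    funext n
    rw [my_regroup k hk u n, Finset.sum_div]
    refine Finset.sum_congr rfl fun r _ => ?_
    rcases eq_or_ne ((n - r + k - 1)/k) 0 with h0 | h0
    · simp [h0]
    · have hc : (((n - r + k - 1)/k : ℕ) : ℝ) ≠ 0 := Nat.cast_ne_zero.mpr h0
      rw [div_mul_div_comm, mul_comm (n:ℝ), mul_div_mul_left _ _ hc]
  rw [key]
  have hp : p = ∑ _r ∈ range k, (1/(k:ℝ)) * p := by
    rw [Finset.sum_const, card_range, nsmul_eq_mul]
    have : (k:ℝ) ≠ 0 := Nat.cast_ne_zero.mpr hk.ne'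
    field_simp
  rw [hp]
  refine tendsto_finset_sum _ fun r hr => ?_
  exact (my_c_tendsto k r hk).mul ((h r (mem_range.mp hr)).comp (my_c_atTop k r hk))


lemma my_marginal {Ω : Type*} [MeasurableSpace Ω]
    (ρ : Measure Ω) [IsProbabilityMeasure ρ]
    (μ : Measure (ℕ → Ω)) [IsProbabilityMeasure μ]
    (hμ : ∀ n : ℕ, Measure.map (fun w (i : Fin n) => w (i : ℕ)) μ
        = Measure.pi (fun _ : Fin n => ρ)) (s k : ℕ) :
    Measure.map (fun w (j : Fin k) => w (s + j)) μ
      = Measure.pi (fun _ : Fin k => ρ) := by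
  classical
  set e : Fin k → Fin (s + k) := fun j => ⟨s + j, by omega⟩ with he
  have heinj : Function.Injective e := by
    intro a b hab
    have := congrArg Fin.val hab
    simp only [e] at this
    exact Fin.ext (by omega)
  have hg : Measurable (fun v : Fin (s+k) → Ω => fun j : Fin k => v (e j)) :=
    measurable_pi_lambda _ fun j => measurable_pi_apply _
  have hproj : Measurable (fun w : ℕ → Ω => fun i : Fin (s+k) => w (i : ℕ)) :=
    measurable_pi_lambda _ fun i => measurable_pi_apply _
  have hcomp : (fun (w : ℕ → Ω) (j : Fin k) => w (s + j))
      = (fun v : Fin (s+k) → Ω => fun j : Fin k => v (e j))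
        ∘ (fun (w : ℕ → Ω) (i : Fin (s+k)) => w (i : ℕ)) := rfl
  rw [hcomp, ← Measure.map_map hg hproj, hμ (s+k)]
  refine (Measure.pi_eq fun A hA => ?_).symm
  rw [Measure.map_apply hg (MeasurableSet.univ_pi hA)]
  set B : Fin (s+k) → Set Ω := fun i => ⋂ (j : Fin k) (_ : e j = i), A j with hB
  have hpre : (fun v : Fin (s+k) → Ω => fun j : Fin k => v (e j)) ⁻¹' (Set.pi Set.univ A)
      = Set.pi Set.univ B := by
    ext v
    simp only [Set.mem_preimage, Set.mem_pi, Set.mem_univ, true_implies, hB,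
      Set.mem_iInter]
    constructor
    · rintro h i j rfl
      exact h j
    · intro h j
      exact h (e j) j rfl
  rw [hpre, Measure.pi_pi]
  have hBe : ∀ j : Fin k, B (e j) = A j := by
    intro j
    ext x
    simp only [hB, Set.mem_iInter]
    constructor
    · intro h; exact h j rfl
    · intro hx j' hj'
      have : j' = j := heinj hj'
      subst this; exact hx
  have hBout : ∀ i : Fin (s+k), i ∉ Finset.univ.image e → B i = Set.univ := by
    intro i hi
    ext x
    simp only [hB, Set.mem_iInter, Set.mem_univ, iff_true]
    intro j hj
    exact absurd (Finset.mem_image.mpr ⟨j, Finset.mem_univ j, hj⟩) hi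
  calc ∏ i, ρ (B i) = ∏ i ∈ Finset.univ.image e, ρ (B i) := by
        refine (Finset.prod_subset (Finset.subset_univ _) fun i _ hi => ?_).symm
        rw [hBout i hi]
        simp
    _ = ∏ j, ρ (B (e j)) := Finset.prod_image (fun a _ b _ hab => heinj hab)
    _ = ∏ j, ρ (A j) := Finset.prod_congr rfl fun j _ => by rw [hBe j]

lemma my_single {Ω : Type*} [MeasurableSpace Ω]
    (ρ : Measure Ω) [IsProbabilityMeasure ρ]
    (μ : Measure (ℕ → Ω)) [IsProbabilityMeasure μ]
    (hμ : ∀ n : ℕ, Measure.map (fun w (i : Fin n) => w (i : ℕ)) μ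
        = Measure.pi (fun _ : Fin n => ρ)) (i : ℕ) (A : Set Ω)
    (hA : MeasurableSet A) :
    μ ((fun w : ℕ → Ω => w i) ⁻¹' A) = ρ A := by
  have hZ : Measurable (fun (w : ℕ → Ω) (j : Fin 1) => w (i + j)) :=
    measurable_pi_lambda _ fun j => measurable_pi_apply _
  have hset : MeasurableSet {v : Fin 1 → Ω | v 0 ∈ A} := (measurable_pi_apply 0) hA
  have hpre : (fun w : ℕ → Ω => w i) ⁻¹' A
      = (fun (w : ℕ → Ω) (j : Fin 1) => w (i + j)) ⁻¹' {v : Fin 1 → Ω | v 0 ∈ A} := by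
    ext w
    simp [Set.mem_preimage]
  rw [hpre, ← Measure.map_apply hZ hset, my_marginal ρ μ hμ i 1]
  have : {v : Fin 1 → Ω | v 0 ∈ A} = Set.pi Set.univ (fun _ : Fin 1 => A) := by
    ext v
    simp [Set.mem_pi, Fin.forall_fin_one]
  rw [this, Measure.pi_pi]
  simp

lemma my_coords_indep {Ω : Type*} [MeasurableSpace Ω]
    (ρ : Measure Ω) [IsProbabilityMeasure ρ]
    (μ : Measure (ℕ → Ω)) [IsProbabilityMeasure μ]
    (hμ : ∀ n : ℕ, Measure.map (fun w (i : Fin n) => w (i : ℕ)) μ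
        = Measure.pi (fun _ : Fin n => ρ))
    (hall : ∀ s : Set Ω, MeasurableSet s) :
    iIndepFun (fun i (w : ℕ → Ω) => w i) μ := by
  classical
  rw [iIndepFun_iff_measure_inter_preimage_eq_mul]
  intro S sets hsets
  set n := S.sup id + 1 with hn
  have hSn : ∀ i ∈ S, i < n := fun i hi =>
    lt_of_le_of_lt (Finset.le_sup (f := id) hi) (Nat.lt_succ_self _)
  set C : ℕ → Set Ω := fun i => if i ∈ S then sets i else Set.univ with hC
  have hproj : Measurable (fun w : ℕ → Ω => fun i : Fin n => w (i : ℕ)) :=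
    measurable_pi_lambda _ fun i => measurable_pi_apply _
  have hpre : (⋂ i ∈ S, (fun w : ℕ → Ω => w i) ⁻¹' sets i)
      = (fun w : ℕ → Ω => fun i : Fin n => w (i : ℕ)) ⁻¹'
          (Set.pi Set.univ (fun i : Fin n => C (i : ℕ))) := by
    ext w
    simp only [Set.mem_iInter, Set.mem_preimage, Set.mem_pi, Set.mem_univ, true_implies]
    constructor
    · intro h i
      by_cases hi : (i : ℕ) ∈ S
      · simpa [hC, hi] using h i hi
      · simp [hC, hi]
    · intro h i hi
      have := h ⟨i, hSn i hi⟩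
      simpa [hC, hi] using this
  have hmeas : MeasurableSet (Set.pi Set.univ (fun i : Fin n => C (i : ℕ))) :=
    MeasurableSet.univ_pi fun i => hall _
  have hLHS : μ (⋂ i ∈ S, (fun w : ℕ → Ω => w i) ⁻¹' sets i) = ∏ i ∈ S, ρ (sets i) := by
    rw [hpre, ← Measure.map_apply hproj hmeas, hμ n, Measure.pi_pi]
    have h1 : ∏ i : Fin n, ρ (C (i : ℕ)) = ∏ i ∈ range n, ρ (C i) :=
      (Finset.prod_range (fun i => ρ (C i))).symm
    rw [h1]
    rw [← Finset.prod_subset (fun i hi => Finset.mem_range.mpr (hSn i hi))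
      (fun i _ hi => by simp [hC, hi])]
    exact Finset.prod_congr rfl fun i hi => by simp [hC, hi]
  rw [hLHS]
  exact Finset.prod_congr rfl fun i hi =>
    (my_single ρ μ hμ i (sets i) (hall _)).symm

lemma my_key {Ω : Type*} [MeasurableSpace Ω]
    (hall : ∀ s : Set Ω, MeasurableSet s)
    (ρ : Measure Ω) [IsProbabilityMeasure ρ]
    (μ : Measure (ℕ → Ω)) [IsProbabilityMeasure μ]
    (hμ : ∀ n : ℕ, Measure.map (fun w (i : Fin n) => w (i : ℕ)) μ
        = Measure.pi (fun _ : Fin n => ρ))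
    (k : ℕ) (hk : 0 < k) (b : Fin k → Ω) :
    ∀ᵐ w ∂μ, Tendsto
        (fun n : ℕ =>
          (({i | i < n ∧ ∀ j : Fin k, w (i + j) = b j} : Set ℕ).ncard : ℝ) / n)
        atTop (nhds (∏ j : Fin k, (ρ {b j}).toReal)) := by
  classical
  set p := ∏ j : Fin k, (ρ {b j}).toReal with hp
  set Sb : Set (Fin k → Ω) := Set.pi Set.univ (fun j => {b j}) with hSbdef
  have hSb : MeasurableSet Sb := MeasurableSet.univ_pi fun j => hall _
  set g : (Fin k → Ω) → ℝ := Sb.indicator (fun _ => (1:ℝ)) with hgdef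
  have hg : Measurable g := measurable_const.indicator hSb
  set Z : ℕ → (ℕ → Ω) → (Fin k → Ω) := fun i w j => w (i + j) with hZdef
  have hZmeas : ∀ i, Measurable (Z i) :=
    fun i => measurable_pi_lambda _ fun j => measurable_pi_apply _
  have hZmap : ∀ i, μ.map (Z i) = Measure.pi (fun _ : Fin k => ρ) :=
    fun i => my_marginal ρ μ hμ i k
  set Y : ℕ → (ℕ → Ω) → ℝ := fun i w => g (Z i w) with hYdef
  have hYind : ∀ i, Y i = (Z i ⁻¹' Sb).indicator (fun _ => (1:ℝ)) := by
    intro i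
    funext w
    simp only [hYdef, hgdef, Set.indicator_apply, Set.mem_preimage]
  have hint : ∀ i, Integrable (Y i) μ := by
    intro i
    rw [hYind i]
    exact (integrable_const 1).indicator (hZmeas i hSb)
  have hexp : ∀ i, ∫ w, Y i w ∂μ = p := by
    intro i
    rw [hYind i, MeasureTheory.integral_indicator_const (1:ℝ) ((hZmeas i) hSb),
      smul_eq_mul, mul_one, measureReal_def,
      ← Measure.map_apply (hZmeas i) hSb, hZmap i, hSbdef, Measure.pi_pi,
      ENNReal.toReal_prod]
  have hident : ∀ i i', IdentDistrib (Y i) (Y i') μ μ := by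
    intro i i'
    have hZid : IdentDistrib (Z i) (Z i') μ μ :=
      ⟨(hZmeas i).aemeasurable, (hZmeas i').aemeasurable, by rw [hZmap i, hZmap i']⟩
    exact hZid.comp hg
  have h0 := my_coords_indep ρ μ hμ hall
  have hindep : ∀ i i', i + k ≤ i' → IndepFun (Y i) (Y i') μ := by
    intro i i' hii
    have hST : Disjoint (Finset.Ico i (i+k)) (Finset.Ico i' (i'+k)) := by
      rw [Finset.disjoint_left]
      intro a ha ha'
      rw [Finset.mem_Ico] at ha ha'
      omega
    have base := h0.indepFun_finset _ _ hST (fun j => measurable_pi_apply j)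
    have hφ1 : Measurable (fun v : {x // x ∈ Finset.Ico i (i+k)} → Ω =>
        g (fun j : Fin k => v ⟨i + j, by
          rw [Finset.mem_Ico]
          exact ⟨Nat.le_add_right _ _, Nat.add_lt_add_left j.isLt i⟩⟩)) :=
      hg.comp (measurable_pi_lambda _ fun j => measurable_pi_apply _)
    have hφ2 : Measurable (fun v : {x // x ∈ Finset.Ico i' (i'+k)} → Ω =>
        g (fun j : Fin k => v ⟨i' + j, by
          rw [Finset.mem_Ico]
          exact ⟨Nat.le_add_right _ _, Nat.add_lt_add_left j.isLt i'⟩⟩)) :=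
      hg.comp (measurable_pi_lambda _ fun j => measurable_pi_apply _)
    exact base.comp hφ1 hφ2
  have hSL : ∀ r, r < k → ∀ᵐ w ∂μ,
      Tendsto (fun M : ℕ => (∑ m ∈ range M, Y (r + k*m) w)/M) atTop (nhds p) := by
    intro r hr
    have hpair : Pairwise (Function.onFun (IndepFun · · μ) fun m => Y (r + k*m)) := by
      intro m m' hne
      rcases hne.lt_or_gt with h | h
      · refine hindep _ _ ?_
        have h2 : k*(m+1) ≤ k*m' := Nat.mul_le_mul_left k h
        have h3 : k*(m+1) = k*m + k := Nat.mul_succ k m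
        omega
      · refine (hindep _ _ ?_).symm
        have h2 : k*(m'+1) ≤ k*m := Nat.mul_le_mul_left k h
        have h3 : k*(m'+1) = k*m' + k := Nat.mul_succ k m'
        omega
    have hSL0 := strong_law_ae_real (fun m => Y (r + k*m))
      (by simpa using hint (r + k*0)) hpair
      (fun m => hident _ _)
    have hE : (μ[(fun m => Y (r + k*m)) 0]) = p := by
      simpa using hexp (r + k*0)
    rw [hE] at hSL0
    exact hSL0
  have hae : ∀ᵐ w ∂μ, ∀ r, r < k →
      Tendsto (fun M : ℕ => (∑ m ∈ range M, Y (r + k*m) w)/M) atTop (nhds p) := by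
    rw [ae_all_iff]
    intro r
    by_cases hr : r < k
    · filter_upwards [hSL r hr] with w hw _
      exact hw
    · filter_upwards with w hr'
      exact absurd hr' hr
  filter_upwards [hae] with w hw
  have hcount : ∀ n : ℕ,
      (({i | i < n ∧ ∀ j : Fin k, w (i + j) = b j} : Set ℕ).ncard : ℝ)
        = ∑ i ∈ range n, Y i w := by
    intro n
    have hset : ({i | i < n ∧ ∀ j : Fin k, w (i + j) = b j} : Set ℕ)
        = ↑((range n).filter (fun i => ∀ j : Fin k, w (i + j) = b j)) := by
      ext i
      simp [Finset.mem_filter, Finset.mem_range]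
    rw [hset, Set.ncard_coe_finset, Finset.card_filter]
    push_cast
    refine Finset.sum_congr rfl fun i _ => ?_
    simp only [hYdef, hgdef, hZdef, hSbdef, Set.indicator_apply, Set.mem_pi,
      Set.mem_univ, true_implies, Set.mem_singleton_iff]
  have heq : (fun n : ℕ =>
      (({i | i < n ∧ ∀ j : Fin k, w (i + j) = b j} : Set ℕ).ncard : ℝ) / n)
      = fun n : ℕ => (∑ i ∈ range n, Y i w)/n :=
    funext fun n => by rw [hcount n]
  rw [heq]
  exact my_limit k hk (fun i => Y i w) p hw


/-- Let `Ω` be a nonempty countable set equipped with the σ-algebra of all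
subsets, let `ρ` be a probability measure on `Ω`, and let `μ = ⊗ρ` be the infinite product
measure on `Ω^ℕ` (characterized by its finite-dimensional marginals being the finite
product measures `ρ^n`).  Then the set of normal sequences, i.e. those `w` such that for
every `k` and every word `b : Fin k → Ω` the relative frequency of (possibly overlapping)
occurrences of `b` among the first `n` positions of `w` converges to `∏ j, ρ {b j}`,
has `μ`-measure `1`. -/
theorem normal_full_measure
    {Ω : Type*} [Nonempty Ω] [Countable Ω] [m : MeasurableSpace Ω] (hm : m = ⊤)
    (ρ : Measure Ω) [IsProbabilityMeasure ρ]
    (μ : Measure (ℕ → Ω)) [IsProbabilityMeasure μ]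
    (hμ : ∀ n : ℕ, Measure.map (fun w (i : Fin n) => w (i : ℕ)) μ
        = Measure.pi (fun _ : Fin n => ρ)) :
    μ {w : ℕ → Ω | ∀ (k : ℕ) (b : Fin k → Ω), 1 ≤ k →
        Tendsto
          (fun n : ℕ =>
            (({i | i < n ∧ ∀ j : Fin k, w (i + j) = b j} : Set ℕ).ncard : ℝ) / n)
          atTop (nhds (∏ j : Fin k, (ρ {b j}).toReal))} = 1 := by
  have hall : ∀ s : Set Ω, MeasurableSet s := by
    intro s
    rw [hm]
    exact MeasurableSpace.measurableSet_top
  have hae : ∀ᵐ w ∂μ, ∀ (k : ℕ) (b : Fin k → Ω), 1 ≤ k →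
      Tendsto
        (fun n : ℕ =>
          (({i | i < n ∧ ∀ j : Fin k, w (i + j) = b j} : Set ℕ).ncard : ℝ) / n)
        atTop (nhds (∏ j : Fin k, (ρ {b j}).toReal)) := by
    rw [ae_all_iff]
    intro k
    rw [ae_all_iff]
    intro b
    by_cases hk : 1 ≤ k
    · filter_upwards [my_key hall ρ μ hμ k hk b] with w hw _
      exact hw
    · filter_upwards with w hk'
      exact absurd hk' hk
  have h0 := ae_iff.mp hae
  obtain ⟨t, hsub, htm, ht0⟩ := exists_measurable_superset_of_null h0
  refine le_antisymm prob_le_one ?_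
  have hsubc : tᶜ ⊆ {w : ℕ → Ω | ∀ (k : ℕ) (b : Fin k → Ω), 1 ≤ k →
      Tendsto
        (fun n : ℕ =>
          (({i | i < n ∧ ∀ j : Fin k, w (i + j) = b j} : Set ℕ).ncard : ℝ) / n)
        atTop (nhds (∏ j : Fin k, (ρ {b j}).toReal))} := by
    intro w hw
    by_contra hns
    exact hw (hsub hns)
  calc (1 : ENNReal) = μ tᶜ := by
        rw [measure_compl htm (measure_ne_top μ t), ht0, measure_univ, tsub_zero]
    _ ≤ _ := measure_mono hsubc
end

section
/- Let Ω = {0,1,…,9}, let Ψ : Ω^ℕ → ℝ be defined by Ψ((a_j)_{j≥1}) = Σ_{j=1}^∞ a_j·10^{-j}, and let 𝒞 be the family of cylinder sets C_{n,b} = {(a_j)_{j≥1} ∈ Ω^ℕ : a_n = b} for n ∈ ℕ and b ∈ Ω. Then the σ-algebra on [0,1] generated by the family of image sets {Ψ(C_{n,b}) : n ∈ ℕ, b ∈ Ω} is exactly the Borel σ-algebra of [0,1]. -/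
open MeasureTheory

/-- The map sending a sequence of decimal digits `(a_j)_{j ≥ 1}` to the real number
`∑_{j=1}^∞ a_j · 10^{-j} ∈ [0,1]`. -/
noncomputable def Psi : (ℕ → Fin 10) → ℝ :=
  fun a => ∑' j : ℕ, (a j : ℝ) / 10 ^ (j + 1)


open Finset

lemma fin10_le (c : Fin 10) : (c : ℝ) ≤ 9 := by
  have := c.isLt; exact_mod_cast Nat.lt_succ_iff.mp this

lemma psi_summable (a : ℕ → Fin 10) : Summable (fun j => (a j : ℝ) / 10 ^ (j + 1)) := by
  apply Summable.of_nonneg_of_le (fun j => by positivity) (fun j => ?_)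
    (summable_geometric_of_lt_one (by norm_num : (0:ℝ) ≤ 1/10) (by norm_num))
  rw [div_le_iff₀ (by positivity)]
  have h1 := fin10_le (a j)
  have h2 : ((1:ℝ)/10) ^ j * 10 ^ (j+1) = 10 := by
    rw [div_pow, one_pow, pow_succ]
    field_simp
  nlinarith [pow_pos (show (0:ℝ) < 1/10 by norm_num) j, pow_pos (show (0:ℝ) < 10 by norm_num) (j+1)]

lemma psi_nonneg (a : ℕ → Fin 10) : 0 ≤ Psi a :=
  tsum_nonneg (fun j => by positivity)

lemma summable_nine : Summable (fun j : ℕ => (9:ℝ) / 10 ^ (j+1)) :=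
  (psi_summable (fun _ => (9 : Fin 10))).congr (fun j => by norm_num [show ((9:Fin 10):ℕ) = 9 from rfl])

lemma tsum_nine : ∑' j : ℕ, (9:ℝ) / 10 ^ (j+1) = 1 := by
  have h : ∀ j : ℕ, (9:ℝ) / 10 ^ (j+1) = (9/10) * (1/10)^j := by
    intro j; rw [pow_succ, div_pow, one_pow]; ring
  rw [tsum_congr h, tsum_mul_left, tsum_geometric_of_lt_one (by norm_num) (by norm_num)]
  norm_num

lemma psi_nine : Psi (fun _ => (9 : Fin 10)) = 1 := by
  rw [Psi, ← tsum_nine]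
  exact tsum_congr (fun j => by norm_num [show ((9:Fin 10):ℕ) = 9 from rfl])

lemma psi_le_one (a : ℕ → Fin 10) : Psi a ≤ 1 := by
  rw [← tsum_nine]
  exact Summable.tsum_le_tsum (fun j => div_le_div_of_nonneg_right (fin10_le (a j)) (by positivity))
    (psi_summable a) summable_nine

lemma psi_split (a : ℕ → Fin 10) (n : ℕ) :
    Psi a = (∑ j ∈ range n, (a j : ℝ) / 10 ^ (j + 1)) + Psi (fun j => a (j + n)) / 10 ^ n := by
  have h := Summable.sum_add_tsum_nat_add n (psi_summable a)
  simp only [Psi]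
  rw [← h]
  congr 1
  rw [← tsum_div_const]
  apply tsum_congr
  intro j
  rw [div_div, ← pow_add]
  ring_nf

lemma psi_eq_zero (a : ℕ → Fin 10) (h : Psi a = 0) : ∀ j, a j = 0 := by
  intro j
  have h1 : (a j : ℝ) / 10 ^ (j+1) ≤ 0 := h ▸ Summable.le_tsum (psi_summable a) j (fun i _ => by positivity)
  have h2 : (0:ℝ) ≤ (a j : ℝ) / 10 ^ (j+1) := by positivity
  have h3 : (a j : ℝ) = 0 := by
    have := le_antisymm h1 h2
    field_simp at this
    rw [mul_zero] at this; exact_mod_cast this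
  exact_mod_cast h3

lemma psi_eq_one (a : ℕ → Fin 10) (h : Psi a = 1) : ∀ j, a j = 9 := by
  set b : ℕ → Fin 10 := fun j => ⟨9 - (a j : ℕ), by omega⟩ with hb
  have hcast : ∀ j, (b j : ℝ) = 9 - (a j : ℝ) := by
    intro j
    have hle : (a j : ℕ) ≤ 9 := Nat.lt_succ_iff.mp (a j).isLt
    simp only [hb]
    push_cast [Nat.cast_sub hle]
    norm_num
  have hsum : Psi a + Psi b = 1 := by
    rw [Psi, Psi, ← Summable.tsum_add (psi_summable a) (psi_summable b), ← tsum_nine]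
    apply tsum_congr
    intro j
    rw [hcast j, ← add_div]
    ring_nf
  have hb0 : Psi b = 0 := by linarith
  intro j
  have := psi_eq_zero b hb0 j
  have : (b j : ℕ) = 0 := by exact_mod_cast this
  have hle : (a j : ℕ) ≤ 9 := Nat.lt_succ_iff.mp (a j).isLt
  simp only [hb] at this
  exact Fin.ext (by omega)

lemma psi_tail_nonneg (a : ℕ → Fin 10) (n : ℕ) : 0 ≤ Psi (fun j => a (j + n)) :=
  psi_nonneg _

lemma psi_structure {a b : ℕ → Fin 10} (h : Psi a = Psi b) {n : ℕ}
    (hmin : ∀ m < n, a m = b m) (hn : (b n : ℕ) < a n) :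
    (a n : ℕ) = (b n : ℕ) + 1 ∧ ∀ j, n < j → a j = 0 ∧ b j = 9 := by
  have ha := psi_split a (n+1)
  have hb := psi_split b (n+1)
  rw [sum_range_succ] at ha hb
  have hsum : ∑ j ∈ range n, ((a j : ℝ)) / 10 ^ (j+1) = ∑ j ∈ range n, ((b j : ℝ)) / 10 ^ (j+1) :=
    Finset.sum_congr rfl (fun j hj => by rw [hmin j (mem_range.mp hj)])
  set Ta := Psi (fun j => a (j + (n+1))) with hTa
  set Tb := Psi (fun j => b (j + (n+1))) with hTb
  have hTa0 : 0 ≤ Ta := psi_nonneg _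
  have hTb0 : 0 ≤ Tb := psi_nonneg _
  have hTa1 : Ta ≤ 1 := psi_le_one _
  have hTb1 : Tb ≤ 1 := psi_le_one _
  have hd : (1:ℝ) ≤ (a n : ℝ) - (b n : ℝ) := by
    have : (b n : ℕ) + 1 ≤ (a n : ℕ) := hn
    have := (Nat.cast_le (α := ℝ)).mpr this
    push_cast at this; linarith
  have hpow : (0:ℝ) < 10 ^ (n+1) := by positivity
  -- equation
  have heq : ((a n : ℝ) - (b n : ℝ)) / 10 ^ (n+1) + Ta / 10 ^ (n+1) = Tb / 10 ^ (n+1) := by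
    rw [ha, hb, hsum] at h
    field_simp at h ⊢
    linarith
  have hkey1 : Ta = 0 ∧ Tb = 1 ∧ (a n : ℝ) - (b n : ℝ) = 1 := by
    have h1 : ((a n : ℝ) - (b n : ℝ)) / 10 ^ (n+1) ≥ 1 / 10^(n+1) := by gcongr
    have h2 : Tb / 10^(n+1) ≤ 1 / 10^(n+1) := by gcongr
    have h3 : 0 ≤ Ta / 10^(n+1) := by positivity
    have h4 : ((a n : ℝ) - (b n : ℝ)) / 10 ^ (n+1) = 1 / 10^(n+1) := by linarith
    have h5 : (a n : ℝ) - (b n : ℝ) = 1 := by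
      field_simp at h4; linarith
    refine ⟨?_, ?_, h5⟩
    · have : Ta / 10^(n+1) = 0 := by rw [h5] at heq; linarith
      field_simp at this; simpa using this
    · have : Tb / 10^(n+1) = 1 / 10^(n+1) := by rw [h5] at heq; linarith
      field_simp at this; linarith
  obtain ⟨hta, htb, hab⟩ := hkey1
  constructor
  · have hcast : ((a n : ℕ) : ℝ) = ((b n : ℕ) : ℝ) + 1 := by push_cast; linarith
    exact_mod_cast hcast
  · intro j hj
    have hja := psi_eq_zero _ hta (j - (n+1))
    have hjb := psi_eq_one _ htb (j - (n+1))
    have hidx : j - (n+1) + (n+1) = j := by omega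
    rw [hidx] at hja hjb
    exact ⟨hja, hjb⟩

/-- If `a ≠ b` are expansions of the same number, then at their first difference,
the larger one ends in zeros and the smaller one in nines. -/
lemma psi_firstdiff {a b : ℕ → Fin 10} (h : Psi a = Psi b) (hne : a ≠ b) :
    ∃ n, (∀ m < n, a m = b m) ∧ a n ≠ b n ∧
      (((b n : ℕ) + 1 = a n ∧ (∀ j, n < j → a j = 0 ∧ b j = 9)) ∨
       ((a n : ℕ) + 1 = b n ∧ (∀ j, n < j → b j = 0 ∧ a j = 9))) := by
  have hex : ∃ n, a n ≠ b n := by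
    by_contra hc; push_neg at hc; exact hne (funext hc)
  classical
  refine ⟨Nat.find hex, fun m hm => ?_, Nat.find_spec hex, ?_⟩
  · by_contra hc; exact Nat.find_min hex hm hc
  · set n := Nat.find hex
    have hmin : ∀ m < n, a m = b m := fun m hm => by
      by_contra hc; exact Nat.find_min hex hm hc
    have hnab : a n ≠ b n := Nat.find_spec hex
    rcases lt_or_gt_of_ne (fun hc : (a n : ℕ) = (b n : ℕ) => hnab (Fin.ext hc)) with hlt | hgt
    · right
      obtain ⟨h1, h2⟩ := psi_structure h.symm (fun m hm => (hmin m hm).symm) hlt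
      exact ⟨h1.symm, h2⟩
    · left
      obtain ⟨h1, h2⟩ := psi_structure h hmin hgt
      exact ⟨h1.symm, h2⟩

/-- An expansion ending in zeros (with nonzero last digit) has at most one other
expansion: the "partner" ending in nines. -/
lemma psi_partner {a c : ℕ → Fin 10} {M : ℕ} (hM : ∀ j, M < j → a j = 0) (hM0 : a M ≠ 0)
    (h : Psi c = Psi a) (hne : c ≠ a) :
    (∀ j < M, c j = a j) ∧ (c M : ℕ) + 1 = (a M : ℕ) ∧ ∀ j, M < j → c j = 9 := by
  obtain ⟨n, hmin, hnab, hcase⟩ := psi_firstdiff h hne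
  rcases hcase with ⟨h1, h2⟩ | ⟨h1, h2⟩
  · -- c n = a n + 1, c ends in 0s, a ends in 9s: impossible
    exfalso
    have := (h2 (max n M + 1) (by omega)).2
    have h0 := hM (max n M + 1) (by omega)
    rw [h0] at this
    exact absurd (congrArg Fin.val this) (by norm_num [show ((0:Fin 10):ℕ) = 0 from rfl, show ((9:Fin 10):ℕ) = 9 from rfl])
  · -- a n = c n + 1, a ends in 0s (consistent), c ends in 9s
    have hnM : n = M := by
      by_contra hc
      rcases Nat.lt_or_ge n M with hlt | hge
      · -- a j = 0 for all j > n contradicts a M ≠ 0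
        exact hM0 ((h2 M hlt).1)
      · have hgt : M < n := by omega
        have := hM n hgt
        rw [this] at h1
        simp [show ((0:Fin 10):ℕ) = 0 from rfl] at h1
    subst hnM
    exact ⟨hmin, h1, fun j hj => (h2 j hj).2⟩

noncomputable def dig (x : ℝ) (n : ℕ) : Fin 10 :=
  ⟨(⌊x * 10^(n+1)⌋ - 10 * ⌊x * 10^n⌋).toNat % 10, Nat.mod_lt _ (by norm_num)⟩

lemma dig_val {x : ℝ} (hx : x ∈ Set.Ico (0:ℝ) 1) (n : ℕ) :
    ((dig x n : ℕ) : ℝ) = ⌊x * 10^(n+1)⌋ - 10 * ⌊x * 10^n⌋ := by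
  have h1 : (10 : ℤ) * ⌊x * 10^n⌋ ≤ ⌊x * 10^(n+1)⌋ := by
    rw [Int.le_floor]
    push_cast
    have : (⌊x * 10^n⌋ : ℝ) ≤ x * 10^n := Int.floor_le _
    calc (10:ℝ) * ⌊x * 10^n⌋ ≤ 10 * (x * 10^n) := by linarith
    _ = x * 10^(n+1) := by ring
  have h2 : ⌊x * 10^(n+1)⌋ < 10 * ⌊x * 10^n⌋ + 10 := by
    rw [Int.floor_lt]
    push_cast
    have : x * 10^n < ⌊x * 10^n⌋ + 1 := Int.lt_floor_add_one _
    calc x * 10^(n+1) = 10 * (x * 10^n) := by ring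
    _ < 10 * (⌊x * 10^n⌋ + 1) := by linarith
    _ = 10 * ⌊x * 10^n⌋ + 10 := by ring
  have h3 : (⌊x * 10^(n+1)⌋ - 10 * ⌊x * 10^n⌋).toNat % 10 = (⌊x * 10^(n+1)⌋ - 10 * ⌊x * 10^n⌋).toNat := by
    apply Nat.mod_eq_of_lt; omega
  simp only [dig, h3]
  have h4 : (0:ℤ) ≤ ⌊x * 10^(n+1)⌋ - 10 * ⌊x * 10^n⌋ := by omega
  have h5 : (((⌊x * 10^(n+1)⌋ - 10 * ⌊x * 10^n⌋).toNat : ℤ) : ℝ) = ((⌊x * 10^(n+1)⌋ : ℤ) : ℝ) - 10 * ((⌊x * 10^n⌋ : ℤ) : ℝ) := by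
    rw [Int.toNat_of_nonneg h4]; push_cast; ring
  push_cast at h5 ⊢
  linarith

lemma dig_partial {x : ℝ} (hx : x ∈ Set.Ico (0:ℝ) 1) (n : ℕ) :
    ∑ m ∈ range n, ((dig x m : ℕ) : ℝ) / 10 ^ (m+1) = ⌊x * 10^n⌋ / 10^n := by
  induction n with
  | zero => simp [Int.floor_eq_zero_iff.mpr (by simpa using hx)]
  | succ n ih =>
    rw [sum_range_succ, ih, dig_val hx n]
    have h10 : (10:ℝ)^n ≠ 0 := by positivity
    have h10' : (10:ℝ)^(n+1) ≠ 0 := by positivity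
    field_simp
    ring

lemma psi_dig {x : ℝ} (hx : x ∈ Set.Ico (0:ℝ) 1) : Psi (dig x) = x := by
  have hs := (psi_summable (dig x)).hasSum.tendsto_sum_nat
  have h2 : Filter.Tendsto (fun n => ∑ m ∈ range n, ((dig x m : ℕ) : ℝ) / 10 ^ (m+1))
      Filter.atTop (nhds x) := by
    have hfl : ∀ n : ℕ, x - (1/10)^n < ⌊x * 10^n⌋ / 10^n ∧ ⌊x * 10^n⌋ / (10:ℝ)^n ≤ x := by
      intro n
      have hp : (0:ℝ) < 10^n := by positivity
      constructor
      · rw [sub_lt_iff_lt_add, div_add' _ _ _ (ne_of_gt hp)]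
        rw [lt_div_iff₀ hp]
        have := Int.lt_floor_add_one (x * 10^n)
        have hpow : ((1:ℝ)/10)^n * 10^n = 1 := by
          rw [div_pow, one_pow]; field_simp
        nlinarith [this]
      · rw [div_le_iff₀ hp]; exact Int.floor_le _
    apply tendsto_of_tendsto_of_tendsto_of_le_of_le (g := fun n => x - (1/10)^n) (h := fun _ => x)
    · have : Filter.Tendsto (fun n : ℕ => (1/10:ℝ)^n) Filter.atTop (nhds 0) :=
        tendsto_pow_atTop_nhds_zero_of_lt_one (by norm_num) (by norm_num)
      simpa using Filter.Tendsto.const_sub x this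
    · exact tendsto_const_nhds
    · intro n; dsimp only; rw [dig_partial hx n]; exact (hfl n).1.le
    · intro n; dsimp only; rw [dig_partial hx n]; exact (hfl n).2
  exact tendsto_nhds_unique hs h2

lemma exists_expansion {x : ℝ} (hx : x ∈ Set.Icc (0:ℝ) 1) : ∃ a, Psi a = x := by
  rcases eq_or_lt_of_le hx.2 with h1 | h1
  · exact ⟨fun _ => 9, by rw [psi_nine, h1]⟩
  · exact ⟨dig x, psi_dig ⟨hx.1, h1⟩⟩

lemma natdigit_sum : ∀ n k : ℕ, k < 10^(n+1) →
    ∑ i ∈ range (n+1), k / 10^i % 10 * 10^i = k := by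
  intro n
  induction n with
  | zero => intro k hk; norm_num at hk ⊢; omega
  | succ n ih =>
    intro k hk
    rw [Finset.sum_range_succ']
    have hstep : ∀ i, k / 10^(i+1) % 10 * 10^(i+1) = 10 * ((k/10) / 10^i % 10 * 10^i) := by
      intro i
      have hdd : k / 10^(i+1) = k / 10 / 10^i := by
        rw [Nat.div_div_eq_div_mul, ← pow_succ']
      rw [hdd, pow_succ]
      ring
    rw [Finset.sum_congr rfl (fun i _ => hstep i), ← Finset.mul_sum,
      ih (k/10) (by rw [Nat.div_lt_iff_lt_mul (by norm_num)]; rw [pow_succ] at hk; exact hk)]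
    simp
    omega

def Qset : Set ℝ := Set.range (fun p : ℕ × ℕ => (p.2 : ℝ) / 10 ^ p.1)

lemma Qset_countable : Qset.Countable := Set.countable_range _

lemma psi_zero_fun : Psi (fun _ => (0 : Fin 10)) = 0 := by
  simp [Psi, show ((0 : Fin 10) : ℕ) = 0 from rfl]

lemma psi_tailzero_eq (u : ℕ → Fin 10) (n : ℕ) (h0 : ∀ j, n < j → u j = 0) :
    Psi u = (∑ j ∈ range (n+1), (u j : ℕ) * 10^(n-j) : ℕ) / 10^(n+1) := by
  have hsplit := psi_split u (n+1)
  have htail : (fun j => u (j + (n+1))) = (fun _ => (0 : Fin 10)) :=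
    funext fun j => h0 _ (by omega)
  rw [htail, psi_zero_fun] at hsplit
  rw [hsplit, zero_div, add_zero]
  push_cast
  rw [Finset.sum_div]
  apply Finset.sum_congr rfl
  intro j hj
  have hj' : j ≤ n := by have := mem_range.mp hj; omega
  have hpow : (10:ℝ)^(n-j) * 10^(j+1) = 10^(n+1) := by
    rw [← pow_add]; congr 1; omega
  rw [div_eq_div_iff (by positivity) (by positivity)]
  calc (u j : ℝ) * 10^(n+1) = (u j : ℝ) * (10^(n-j) * 10^(j+1)) := by rw [hpow]
  _ = (u j : ℝ) * 10^(n-j) * 10^(j+1) := by ring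

lemma psi_multi_mem {a b : ℕ → Fin 10} (h : Psi a = Psi b) (hne : a ≠ b) : Psi a ∈ Qset := by
  obtain ⟨n, hmin, hnab, hcase⟩ := psi_firstdiff h hne
  rcases hcase with ⟨_, h2⟩ | ⟨_, h2⟩
  · exact ⟨(n+1, _), (psi_tailzero_eq a n (fun j hj => (h2 j hj).1)).symm⟩
  · rw [h]
    exact ⟨(n+1, _), (psi_tailzero_eq b n (fun j hj => (h2 j hj).1)).symm⟩

lemma partner_unique {u : ℕ → Fin 10} {n : ℕ} (hM : ∀ j, n < j → u j = 0) (hM0 : u n ≠ 0)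
    {v a : ℕ → Fin 10} (hv : Psi v = Psi u) (hvne : v ≠ u) (ha : Psi a = Psi u)
    (hane : a ≠ u) : a = v := by
  obtain ⟨hv1, hv2, hv3⟩ := psi_partner hM hM0 hv hvne
  obtain ⟨ha1, ha2, ha3⟩ := psi_partner hM hM0 ha hane
  funext j
  rcases lt_trichotomy j n with hj | hj | hj
  · rw [ha1 j hj, hv1 j hj]
  · subst hj; exact Fin.ext (by omega)
  · rw [ha3 j hj, hv3 j hj]

lemma exists_two_expansions {x : ℝ} (hx : x ∈ Set.Icc (0:ℝ) 1) :
    ∃ p q, Psi p = x ∧ Psi q = x ∧ ∀ a, Psi a = x → a = p ∨ a = q := by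
  obtain ⟨p₀, hp₀⟩ := exists_expansion hx
  by_cases hall : ∀ a, Psi a = x → a = p₀
  · exact ⟨p₀, p₀, hp₀, hp₀, fun a ha => Or.inl (hall a ha)⟩
  push_neg at hall
  obtain ⟨b, hb, hbne⟩ := hall
  obtain ⟨n, hmin, hnab, hcase⟩ := psi_firstdiff (hb.trans hp₀.symm) hbne
  have main : ∀ u v : ℕ → Fin 10, Psi u = x → Psi v = x → ((v n : ℕ) + 1 = u n) →
      (∀ j, n < j → u j = 0) →
      ∃ p q, Psi p = x ∧ Psi q = x ∧ ∀ a, Psi a = x → a = p ∨ a = q := by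
    intro u v hu hv h1 h2
    have hM0 : u n ≠ 0 := by
      intro hc
      rw [hc] at h1
      simp [show ((0:Fin 10):ℕ) = 0 from rfl] at h1
    have hvne : v ≠ u := by
      intro hc; rw [hc] at h1; omega
    refine ⟨u, v, hu, hv, fun a ha => ?_⟩
    by_cases hau : a = u
    · exact Or.inl hau
    · exact Or.inr (partner_unique h2 hM0 (hv.trans hu.symm) hvne (ha.trans hu.symm) hau)
  rcases hcase with ⟨h1, h2⟩ | ⟨h1, h2⟩
  · exact main b p₀ hb hp₀ h1 (fun j hj => (h2 j hj).1)
  · exact main p₀ b hp₀ hb h1 (fun j hj => (h2 j hj).1)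

lemma key_aux {p q : ℕ → Fin 10} {N : ℕ} (hq : Psi q = Psi p)
    (hNmin : ∀ m < N, p m = q m) (hlt : (q N : ℕ) < p N) {y : ℝ}
    (h1 : ∃ a, Psi a = y ∧ a N = p N) (h2 : ∃ a, Psi a = y ∧ a N = q N)
    (h3 : ∀ (m : ℕ) (a : ℕ → Fin 10), Psi a = y → a m = p m ∨ a m = q m) : y = Psi p := by
  obtain ⟨hpq1, hpq2⟩ := psi_structure hq.symm hNmin hlt
  obtain ⟨a, ha, haN⟩ := h1
  obtain ⟨a', ha', ha'N⟩ := h2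
  have hmin' : ∀ m < N, a m = a' m := by
    intro m hm
    have hpqm := hNmin m hm
    rcases h3 m a ha with h | h <;> rcases h3 m a' ha' with h' | h' <;>
      simp [h, h', hpqm]
  have hltN : (a' N : ℕ) < a N := by rw [haN, ha'N]; exact hlt
  obtain ⟨hs1, hs2⟩ := psi_structure (ha.trans ha'.symm) hmin' hltN
  have hap : a = p := by
    funext j
    rcases lt_trichotomy j N with hj | hj | hj
    · rcases h3 j a ha with hh | hh
      · exact hh
      · rw [hh, ← hNmin j hj]
    · subst hj; exact haN
    · exact ((hs2 j hj).1).trans ((hpq2 j hj).1).symm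
  rw [← ha, hap]

lemma sum_digits_real (n k : ℕ) (hk : k < 10^(n+1)) :
    ∑ m ∈ range (n+1), ((k / 10^(n-m) % 10 : ℕ) : ℝ) / 10^(m+1) = (k:ℝ) / 10^(n+1) := by
  have hnat : ∑ m ∈ range (n+1), k / 10^(n-m) % 10 * 10^(n-m) = k := by
    have := Finset.sum_range_reflect (fun i => k / 10^i % 10 * 10^i) (n+1)
    simp only [Nat.add_sub_cancel] at this
    rw [this]
    exact natdigit_sum n k hk
  have : ((∑ m ∈ range (n+1), k / 10^(n-m) % 10 * 10^(n-m) : ℕ) : ℝ) / 10^(n+1)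
      = (k:ℝ) / 10^(n+1) := by rw [hnat]
  rw [← this]
  push_cast
  rw [Finset.sum_div]
  apply Finset.sum_congr rfl
  intro m hm
  have hm' : m ≤ n := by have := mem_range.mp hm; omega
  have hpow : (10:ℝ)^(n-m) * 10^(m+1) = 10^(n+1) := by
    rw [← pow_add]; congr 1; omega
  rw [div_eq_div_iff (by positivity) (by positivity)]
  calc ((k / 10^(n-m) % 10 : ℕ) : ℝ) * 10^(n+1)
      = ((k / 10^(n-m) % 10 : ℕ) : ℝ) * (10^(n-m) * 10^(m+1)) := by rw [hpow]
  _ = ((k / 10^(n-m) % 10 : ℕ) : ℝ) * 10^(n-m) * 10^(m+1) := by ring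

lemma exists_expansion_prefix (n k : ℕ) (hk : k + 1 ≤ 10^(n+1)) {x : ℝ}
    (hx : x ∈ Set.Icc ((k:ℝ)/10^(n+1)) (((k:ℝ)+1)/10^(n+1))) :
    ∃ a : ℕ → Fin 10, Psi a = x ∧ ∀ m ≤ n, (a m : ℕ) = k / 10^(n-m) % 10 := by
  have hpow : (0:ℝ) < 10^(n+1) := by positivity
  by_cases hend : x = ((k:ℝ)+1)/10^(n+1)
  · refine ⟨fun m => if m ≤ n then ⟨k / 10^(n-m) % 10, Nat.mod_lt _ (by norm_num)⟩ else 9,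
      ?_, fun m hm => by simp [hm]⟩
    rw [psi_split _ (n+1)]
    have h1 : ∑ j ∈ range (n+1), ((((if j ≤ n then (⟨k / 10^(n-j) % 10, Nat.mod_lt _ (by norm_num)⟩ : Fin 10) else 9 : Fin 10)) : ℕ) : ℝ) / 10 ^ (j+1)
        = (k:ℝ) / 10^(n+1) := by
      rw [← sum_digits_real n k (by omega)]
      apply Finset.sum_congr rfl
      intro j hj
      have : j ≤ n := by have := mem_range.mp hj; omega
      simp [this]
    have h2 : (fun j => (if (j + (n+1)) ≤ n then (⟨k / 10^(n-(j+(n+1))) % 10, Nat.mod_lt _ (by norm_num)⟩ : Fin 10) else 9)) = (fun _ => (9 : Fin 10)) := by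
      funext j; simp [show ¬ (j + (n+1) ≤ n) by omega]
    rw [h1, h2, psi_nine, hend]
    field_simp
  · have hxlt : x < ((k:ℝ)+1)/10^(n+1) := lt_of_le_of_ne hx.2 hend
    set y := x * 10^(n+1) - k with hy
    have hy0 : y ∈ Set.Ico (0:ℝ) 1 := by
      constructor
      · have := hx.1; rw [hy]; rw [div_le_iff₀ hpow] at this; linarith
      · rw [hy]; rw [lt_div_iff₀ hpow] at hxlt; linarith
    refine ⟨fun m => if m ≤ n then ⟨k / 10^(n-m) % 10, Nat.mod_lt _ (by norm_num)⟩ else dig y (m - (n+1)),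
      ?_, fun m hm => by simp [hm]⟩
    rw [psi_split _ (n+1)]
    have h1 : ∑ j ∈ range (n+1), ((((if j ≤ n then (⟨k / 10^(n-j) % 10, Nat.mod_lt _ (by norm_num)⟩ : Fin 10) else dig y (j - (n+1)) : Fin 10)) : ℕ) : ℝ) / 10 ^ (j+1)
        = (k:ℝ) / 10^(n+1) := by
      rw [← sum_digits_real n k (by omega)]
      apply Finset.sum_congr rfl
      intro j hj
      have : j ≤ n := by have := mem_range.mp hj; omega
      simp [this]
    have h2 : (fun j => (if (j + (n+1)) ≤ n then (⟨k / 10^(n-(j+(n+1))) % 10, Nat.mod_lt _ (by norm_num)⟩ : Fin 10) else dig y ((j + (n+1)) - (n+1)))) = dig y := by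
      funext j; simp [show ¬ (j + (n+1) ≤ n) by omega]
    rw [h1, h2, psi_dig hy0, hy]
    field_simp
    ring

lemma psi_term_le (a : ℕ → Fin 10) (j : ℕ) : (a j : ℝ) / 10 ^ (j+1) ≤ (1/10)^j := by
  rw [div_le_iff₀ (by positivity)]
  have h1 := fin10_le (a j)
  have h2 : ((1:ℝ)/10) ^ j * 10 ^ (j+1) = 10 := by
    rw [div_pow, one_pow, pow_succ]
    field_simp
  nlinarith [pow_pos (show (0:ℝ) < 1/10 by norm_num) j, pow_pos (show (0:ℝ) < 10 by norm_num) (j+1)]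

lemma psi_continuous : Continuous Psi := by
  apply continuous_tsum (u := fun j => (1/10:ℝ)^j)
  · intro j
    exact ((continuous_of_discreteTopology : Continuous fun c : Fin 10 => ((c:ℕ):ℝ)/10^(j+1))).comp (continuous_apply j)
  · exact summable_geometric_of_lt_one (by norm_num) (by norm_num)
  · intro j a
    rw [Real.norm_of_nonneg (by positivity)]
    exact psi_term_le a j

section SigmaAlgebra
open MeasurableSpace

variable {M : MeasurableSpace (Set.Icc (0:ℝ) 1)}
  (hE : ∀ (n : ℕ) (b : Fin 10),
    MeasurableSet[M] (Subtype.val ⁻¹' (Psi '' {a : ℕ → Fin 10 | a n = b})))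

lemma mem_E_iff (y : Set.Icc (0:ℝ) 1) (n : ℕ) (b : Fin 10) :
    y ∈ (Subtype.val ⁻¹' (Psi '' {a : ℕ → Fin 10 | a n = b}) : Set (Set.Icc (0:ℝ) 1))
      ↔ ∃ a : ℕ → Fin 10, Psi a = (y : ℝ) ∧ a n = b := by
  simp only [Set.mem_preimage, Set.mem_image, Set.mem_setOf_eq]
  constructor
  · rintro ⟨a, h1, h2⟩; exact ⟨a, h2, h1⟩
  · rintro ⟨a, h1, h2⟩; exact ⟨a, h2, h1⟩

include hE in
lemma singleton_meas (x : Set.Icc (0:ℝ) 1) : MeasurableSet[M] {x} := by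
  obtain ⟨p, q, hp, hq, huniq⟩ := exists_two_expansions x.2
  classical
  set T : Set (Set.Icc (0:ℝ) 1) :=
    ((⋂ m, Subtype.val ⁻¹' (Psi '' {a : ℕ → Fin 10 | a m = p m})) ∩
     (⋂ m, Subtype.val ⁻¹' (Psi '' {a : ℕ → Fin 10 | a m = q m}))) ∩
    (⋂ m, ⋂ b : Fin 10, ⋂ (_ : b ≠ p m ∧ b ≠ q m),
      (Subtype.val ⁻¹' (Psi '' {a : ℕ → Fin 10 | a m = b}))ᶜ) with hT
  have hTeq : {x} = T := by
    ext y
    simp only [Set.mem_singleton_iff, hT, Set.mem_inter_iff, Set.mem_iInter, Set.mem_compl_iff]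
    constructor
    · rintro rfl
      refine ⟨⟨fun m => (mem_E_iff y m (p m)).mpr ⟨p, hp, rfl⟩,
              fun m => (mem_E_iff y m (q m)).mpr ⟨q, hq, rfl⟩⟩,
              fun m b hb hmem => ?_⟩
      obtain ⟨a, ha, ham⟩ := (mem_E_iff y m b).mp hmem
      rcases huniq a ha with rfl | rfl
      · exact hb.1 ham.symm
      · exact hb.2 ham.symm
    · rintro ⟨⟨h1, h2⟩, h3⟩
      have h1' : ∀ m, ∃ a, Psi a = (y:ℝ) ∧ a m = p m := fun m => (mem_E_iff y m (p m)).mp (h1 m)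
      have h2' : ∀ m, ∃ a, Psi a = (y:ℝ) ∧ a m = q m := fun m => (mem_E_iff y m (q m)).mp (h2 m)
      have h3' : ∀ (m : ℕ) (a : ℕ → Fin 10), Psi a = (y:ℝ) → a m = p m ∨ a m = q m := by
        intro m a ha
        by_contra hc
        push_neg at hc
        exact h3 m (a m) ⟨hc.1, hc.2⟩ ((mem_E_iff y m (a m)).mpr ⟨a, ha, rfl⟩)
      have hyx : (y : ℝ) = (x : ℝ) := by
        by_cases hpq : p = q
        · obtain ⟨a, ha, _⟩ := h1' 0
          have hap : a = p := by
            funext m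
            rcases h3' m a ha with h | h
            · exact h
            · rw [h, hpq]
          rw [← ha, hap, hp]
        · have hex : ∃ m, p m ≠ q m := by
            by_contra hc; push_neg at hc; exact hpq (funext hc)
          set N := Nat.find hex with hN
          have hNmin : ∀ m < N, p m = q m := fun m hm => by
            by_contra hc; exact Nat.find_min hex hm hc
          have hNne : p N ≠ q N := Nat.find_spec hex
          rcases lt_or_gt_of_ne (fun hc : (p N : ℕ) = (q N : ℕ) => hNne (Fin.ext hc)) with hlt | hgt
          · have := key_aux (p := q) (q := p) (hp.trans hq.symm)
              (fun m hm => (hNmin m hm).symm) hlt (h2' N) (h1' N)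
              (fun m a ha => (h3' m a ha).symm)
            rw [this, hq]
          · have := key_aux (q := q) (hq.trans hp.symm) hNmin hgt (h1' N) (h2' N) h3'
            rw [this, hp]
      exact Subtype.ext hyx
  rw [hTeq, hT]
  refine MeasurableSet.inter (MeasurableSet.inter ?_ ?_) ?_
  · exact MeasurableSet.iInter (fun m => hE m (p m))
  · exact MeasurableSet.iInter (fun m => hE m (q m))
  · exact MeasurableSet.iInter fun m => MeasurableSet.iInter fun b =>
      MeasurableSet.iInter fun _ => (hE m b).compl

include hE in
lemma countable_meas {t : Set (Set.Icc (0:ℝ) 1)} (ht : t.Countable) : MeasurableSet[M] t := by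
  rw [← Set.biUnion_of_singleton t]
  exact MeasurableSet.biUnion ht (fun x _ => singleton_meas hE x)

include hE in
lemma grid_meas (n k : ℕ) (hk : k + 1 ≤ 10^(n+1)) :
    MeasurableSet[M] (Subtype.val ⁻¹'
      (Set.Icc ((k:ℝ)/10^(n+1)) (((k:ℝ)+1)/10^(n+1)))) := by
  classical
  set P : Set (Set.Icc (0:ℝ) 1) :=
    Subtype.val ⁻¹' (Set.Icc ((k:ℝ)/10^(n+1)) (((k:ℝ)+1)/10^(n+1))) with hP
  set U : Set (Set.Icc (0:ℝ) 1) :=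
    ⋂ m, ⋂ (_ : m ≤ n),
      Subtype.val ⁻¹' (Psi '' {a : ℕ → Fin 10 | a m = ⟨k / 10^(n-m) % 10, Nat.mod_lt _ (by norm_num)⟩}) with hU
  have hUmeas : MeasurableSet[M] U :=
    MeasurableSet.iInter fun m => MeasurableSet.iInter fun _ => hE m _
  have hPU : P ⊆ U := by
    intro y hy
    obtain ⟨a, ha, hpre⟩ := exists_expansion_prefix n k hk hy
    simp only [hU, Set.mem_iInter]
    intro m hm
    exact (mem_E_iff y m _).mpr ⟨a, ha, Fin.ext (by simpa using hpre m hm)⟩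
  have hdiff : U \ P ⊆ Subtype.val ⁻¹' Qset := by
    rintro y ⟨hyU, hyP⟩
    by_contra hQ
    have huniq : ∀ a b : ℕ → Fin 10, Psi a = (y:ℝ) → Psi b = (y:ℝ) → a = b := by
      intro a b ha hb
      by_contra hne
      exact hQ (Set.mem_preimage.mpr (ha ▸ psi_multi_mem (ha.trans hb.symm) hne))
    simp only [hU, Set.mem_iInter] at hyU
    obtain ⟨a₀, ha₀, h0⟩ := (mem_E_iff y 0 _).mp (hyU 0 (Nat.zero_le n))
    have hdig : ∀ m ≤ n, (a₀ m : ℕ) = k / 10^(n-m) % 10 := by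
      intro m hm
      obtain ⟨a, ha, ham⟩ := (mem_E_iff y m _).mp (hyU m hm)
      rw [huniq a₀ a ha₀ ha, ham]
    apply hyP
    have hsplit := psi_split a₀ (n+1)
    have hsum : ∑ j ∈ range (n+1), ((a₀ j : ℕ) : ℝ) / 10^(j+1) = (k:ℝ)/10^(n+1) := by
      rw [← sum_digits_real n k (by omega)]
      exact Finset.sum_congr rfl fun j hj => by
        rw [hdig j (by have := mem_range.mp hj; omega)]
    rw [ha₀, hsum] at hsplit
    have ht0 : 0 ≤ Psi (fun j => a₀ (j + (n+1))) := psi_nonneg _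
    have ht1 : Psi (fun j => a₀ (j + (n+1))) ≤ 1 := psi_le_one _
    have hpow : (0:ℝ) < 10^(n+1) := by positivity
    constructor
    · rw [hsplit]
      have : 0 ≤ Psi (fun j => a₀ (j + (n+1))) / 10^(n+1) := by positivity
      linarith
    · rw [hsplit]
      have hle : Psi (fun j => a₀ (j + (n+1))) / 10^(n+1) ≤ 1 / 10^(n+1) := by gcongr
      have h2 : ((k:ℝ)+1)/10^(n+1) = (k:ℝ)/10^(n+1) + 1/10^(n+1) := by ring
      rw [h2]
      linarith
  have hPeq : P = U \ (U \ P) := by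
    ext y
    constructor
    · intro hy; exact ⟨hPU hy, fun h => h.2 hy⟩
    · rintro ⟨hyU, hy⟩
      by_contra hc
      exact hy ⟨hyU, hc⟩
  rw [hP] at hPeq ⊢
  rw [hPeq]
  exact hUmeas.diff (countable_meas hE ((Qset_countable.preimage Subtype.val_injective).mono hdiff))

end SigmaAlgebra

section SigmaAlgebra2
open MeasurableSpace

variable {M : MeasurableSpace (Set.Icc (0:ℝ) 1)}
  (hE : ∀ (n : ℕ) (b : Fin 10),
    MeasurableSet[M] (Subtype.val ⁻¹' (Psi '' {a : ℕ → Fin 10 | a n = b})))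

include hE in
lemma Iio_meas (c : ℝ) :
    MeasurableSet[M] (Subtype.val ⁻¹' (Set.Iio c) : Set (Set.Icc (0:ℝ) 1)) := by
  classical
  have heq : (Subtype.val ⁻¹' (Set.Iio c) : Set (Set.Icc (0:ℝ) 1)) =
      ⋃ (n : ℕ), ⋃ (k : ℕ), ⋃ (_ : k + 1 ≤ 10^(n+1) ∧ ((k:ℝ)+1)/10^(n+1) < c),
        Subtype.val ⁻¹' (Set.Icc ((k:ℝ)/10^(n+1)) (((k:ℝ)+1)/10^(n+1))) := by
    ext y
    simp only [Set.mem_preimage, Set.mem_Iio, Set.mem_iUnion, Set.mem_Icc]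
    constructor
    · intro hy
      have hc : 0 < c - (y:ℝ) := by linarith
      obtain ⟨n, hn⟩ := exists_pow_lt_of_lt_one hc (by norm_num : (1/10:ℝ) < 1)
      have hn' : (1:ℝ)/10^(n+1) < c - (y:ℝ) := by
        have h1 : ((1:ℝ)/10)^n = 1/10^n := by rw [div_pow, one_pow]
        have h2 : (1:ℝ)/10^(n+1) ≤ 1/10^n :=
          one_div_le_one_div_of_le (by positivity) (pow_le_pow_right₀ (by norm_num) (by omega))
        rw [h1] at hn
        linarith
      have hpow : (0:ℝ) < 10^(n+1) := by positivity
      rcases lt_or_eq_of_le y.2.2 with hy1 | hy1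
      · set k : ℕ := ⌊(y:ℝ) * 10^(n+1)⌋.toNat with hkdef
        have hfl0 : (0:ℤ) ≤ ⌊(y:ℝ) * 10^(n+1)⌋ :=
          Int.floor_nonneg.mpr (mul_nonneg y.2.1 (by positivity))
        have hkfl : (k:ℝ) ≤ (y:ℝ) * 10^(n+1) := by
          rw [hkdef]
          rw [← Int.cast_natCast, Int.toNat_of_nonneg hfl0]
          exact Int.floor_le _
        have hkfl2 : (y:ℝ) * 10^(n+1) < (k:ℝ) + 1 := by
          rw [hkdef]
          rw [← Int.cast_natCast, Int.toNat_of_nonneg hfl0]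
          exact Int.lt_floor_add_one _
        have hklt : k + 1 ≤ 10^(n+1) := by
          by_contra hcon
          push_neg at hcon
          have : (10^(n+1) : ℝ) ≤ (k:ℝ) := by exact_mod_cast Nat.lt_succ_iff.mp hcon
          have hl : (y:ℝ) * 10^(n+1) < 10^(n+1) := by nlinarith [hy1, hpow]
          linarith
        refine ⟨n, k, ⟨hklt, ?_⟩, ?_, ?_⟩
        · rw [div_lt_iff₀ hpow]
          calc (k:ℝ) + 1 ≤ (y:ℝ) * 10^(n+1) + 1 := by linarith
          _ < c * 10^(n+1) := by
            have := mul_lt_mul_of_pos_right (show (y:ℝ) + 1/10^(n+1) < c by linarith) hpow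
            have he : ((y:ℝ) + 1/10^(n+1)) * 10^(n+1) = (y:ℝ) * 10^(n+1) + 1 := by
              field_simp
            linarith [he ▸ this]
        · rw [div_le_iff₀ hpow]; linarith
        · rw [le_div_iff₀ hpow]; linarith
      · have h1le : (1:ℕ) ≤ 10^(n+1) := Nat.one_le_iff_ne_zero.mpr (pow_ne_zero _ (by norm_num))
        have hcast : ((10^(n+1) - 1 : ℕ) : ℝ) = (10:ℝ)^(n+1) - 1 := by
          rw [Nat.cast_sub h1le]; push_cast; ring
        have hone : ((10:ℝ)^(n+1) - 1 + 1) / 10^(n+1) = 1 := by field_simp; ring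
        refine ⟨n, 10^(n+1) - 1, ⟨by omega, ?_⟩, ?_, ?_⟩
        · rw [hcast, hone]; linarith [hy1 ▸ hy]
        · rw [hcast, hy1, div_le_one hpow]; linarith
        · rw [hcast, hy1, hone]
    · rintro ⟨n, k, ⟨hk1, hk2⟩, _, hy2⟩
      have hpow : (0:ℝ) < 10^(n+1) := by positivity
      linarith
  rw [heq]
  exact MeasurableSet.iUnion fun n => MeasurableSet.iUnion fun k =>
    MeasurableSet.iUnion fun hcond => grid_meas hE n k hcond.1

end SigmaAlgebra2

/-- the σ-algebra on `[0,1]` generated by the images under `Ψ` of the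
cylinder sets `C_{n,b} = {a : a_n = b}` is exactly the Borel σ-algebra of `[0,1]`,
i.e. the trace on `[0,1]` of the Borel σ-algebra of `ℝ`.  (Since `Ψ(C_{n,b}) ⊆ [0,1]`,
the image set is viewed as a subset of `[0,1]` via `Subtype.val ⁻¹'`.) -/
theorem generateFrom_images_cylinders_eq_borel :
    MeasurableSpace.generateFrom
      {s : Set (Set.Icc (0 : ℝ) 1) | ∃ (n : ℕ) (b : Fin 10),
        s = Subtype.val ⁻¹' (Psi '' {a : ℕ → Fin 10 | a n = b})}
      = MeasurableSpace.comap Subtype.val (borel ℝ) := by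
  apply le_antisymm
  · apply MeasurableSpace.generateFrom_le
    rintro s ⟨n, b, rfl⟩
    apply MeasurableSpace.measurableSet_comap.mpr
    refine ⟨Psi '' {a : ℕ → Fin 10 | a n = b}, ?_, rfl⟩
    have hset : {a : ℕ → Fin 10 | a n = b} = (fun a : ℕ → Fin 10 => a n) ⁻¹' {b} := rfl
    have hcl : IsClosed (Psi '' {a : ℕ → Fin 10 | a n = b}) := by
      rw [hset]
      exact ((((isClosed_singleton (x := b)).preimage (continuous_apply n)).isCompact).image
        psi_continuous).isClosed
    have h := hcl.measurableSet
    rwa [BorelSpace.measurable_eq (α := ℝ)] at h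
  · rw [borel_eq_generateFrom_Iio ℝ, MeasurableSpace.comap_generateFrom]
    apply MeasurableSpace.generateFrom_le
    rintro s ⟨t, ⟨c, rfl⟩, rfl⟩
    have hE : ∀ (n : ℕ) (b : Fin 10),
        MeasurableSet[MeasurableSpace.generateFrom
          {s : Set (Set.Icc (0 : ℝ) 1) | ∃ (n : ℕ) (b : Fin 10),
            s = Subtype.val ⁻¹' (Psi '' {a : ℕ → Fin 10 | a n = b})}]
          (Subtype.val ⁻¹' (Psi '' {a : ℕ → Fin 10 | a n = b})) :=
      fun n b => MeasurableSpace.measurableSet_generateFrom ⟨n, b, rfl⟩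
    exact Iio_meas hE c
end

section
/- Let Ω = {0,1,…,9}, let ρ be a probability measure on Ω with ρ({9}) < 1, let μ_ρ = ⊗ρ be the infinite product measure on Ω^ℕ, let Ψ : Ω^ℕ → ℝ be defined by Ψ((a_j)_{j≥1}) = Σ_{j=1}^∞ a_j·10^{-j}, and let λ_{μ_ρ} = Ψ_*(μ_ρ) be the pushforward measure on [0,1]. Let N_{μ_ρ} be the set of numbers η ∈ [0,1] that are normal with respect to λ_{μ_ρ}, i.e. η = Σ_{j=1}^∞ a_j·10^{-j} for a digit sequence (a_j)_{j≥1} with infinitely many a_j < 9 such that for every k ∈ ℕ and every word b_1…b_k of k digits, (1/n)·#{i ∈ {1,…,n} : a_{i+j-1} = b_j for all j = 1,…,k} converges to ∏_{j=1}^k ρ({b_j}) as n → ∞. Then λ_{μ_ρ}(N_{μ_ρ}) = 1. -/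
open MeasureTheory Filter
open Topology
open scoped Classical

/-- The set of numbers `η ∈ [0,1]` that are normal with respect to `λ_{μ_ρ}`:
`η = ∑_{j=1}^∞ a_j 10^{-j}` for a digit sequence with infinitely many digits `< 9`,
such that for every `k ≥ 1` and every word `b : Fin k → Fin 10`, the frequency of
(possibly overlapping) occurrences of the word among the first `n` digits converges
to `∏ j, ρ {b j}`. -/
def NormalSet (ρ : Measure (Fin 10)) : Set ℝ :=
  {x : ℝ | ∃ a : ℕ → Fin 10,
    x = Psi a ∧ {j : ℕ | (a j : ℕ) < 9}.Infinite ∧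
    ∀ (k : ℕ) (b : Fin k → Fin 10), 1 ≤ k →
      Tendsto
        (fun n : ℕ =>
          (({i | i < n ∧ ∀ j : Fin k, a (i + j) = b j} : Set ℕ).ncard : ℝ) / n)
        atTop (nhds (∏ j : Fin k, (ρ {b j}).toReal))}

lemma cylinder_meas (ρ : Measure (Fin 10)) [IsProbabilityMeasure ρ]
    (μ : Measure (ℕ → Fin 10))
    (hμ : ∀ n : ℕ, Measure.map (fun w (i : Fin n) => w (i : ℕ)) μ
        = Measure.pi (fun _ : Fin n => ρ))
    (s : Finset ℕ) (c : ℕ → Fin 10) :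
    μ {a | ∀ i ∈ s, a i = c i} = ∏ i ∈ s, ρ {c i} := by
  set n := s.sup (· + 1) with hn
  have hsn : ∀ i ∈ s, i < n := fun i hi => Nat.lt_of_succ_le (Finset.le_sup (f := (· + 1)) hi)
  set F : Fin n → Set (Fin 10) := fun i => if (i : ℕ) ∈ s then {c i} else Set.univ with hF
  have hset : {a : ℕ → Fin 10 | ∀ i ∈ s, a i = c i}
      = (fun w (i : Fin n) => w (i : ℕ)) ⁻¹' (Set.univ.pi F) := by
    ext a
    simp only [Set.mem_setOf_eq, Set.mem_preimage, Set.mem_pi, Set.mem_univ, forall_true_left, hF]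
    constructor
    · intro h i
      by_cases hi : (i : ℕ) ∈ s
      · simp [hi, h _ hi]
      · simp [hi]
    · intro h i hi
      have := h ⟨i, hsn i hi⟩
      simpa [hi] using this
  have hmeas : Measurable (fun w (i : Fin n) => w (i : ℕ) : (ℕ → Fin 10) → Fin n → Fin 10) :=
    measurable_pi_lambda _ fun i => measurable_pi_apply _
  have hFm : MeasurableSet (Set.univ.pi F) :=
    MeasurableSet.univ_pi fun i => by
      by_cases hi : (i : ℕ) ∈ s <;> simp [hF, hi]
  rw [hset, ← Measure.map_apply hmeas hFm, hμ n, Measure.pi_pi]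
  have : ∀ i : Fin n, ρ (F i) = if (i : ℕ) ∈ s then ρ {c i} else 1 := by
    intro i
    by_cases hi : (i : ℕ) ∈ s <;> simp [hF, hi]
  rw [Fintype.prod_congr _ _ this]
  rw [Fin.prod_univ_eq_prod_range (fun j => if j ∈ s then ρ {c j} else 1) n]
  rw [← Finset.prod_filter]
  congr 1
  rw [Finset.filter_mem_eq_inter, Finset.inter_eq_right]
  intro i hi
  exact Finset.mem_range.2 (hsn i hi)

/-- Extension of a word to a function on ℕ, shifted by `t`. -/
def wordExt {k : ℕ} (t : ℕ) (b : Fin k → Fin 10) : ℕ → Fin 10 :=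
  fun i => if h : i - t < k then b ⟨i - t, h⟩ else 0

def cylSet {k : ℕ} (t : ℕ) (b : Fin k → Fin 10) : Set (ℕ → Fin 10) :=
  {a | ∀ j : Fin k, a (t + j) = b j}

lemma cylSet_eq {k : ℕ} (t : ℕ) (b : Fin k → Fin 10) :
    cylSet t b = {a | ∀ i ∈ Finset.Ico t (t + k), a i = wordExt t b i} := by
  ext a
  simp only [cylSet, Set.mem_setOf_eq, Finset.mem_Ico]
  constructor
  · rintro h i ⟨h1, h2⟩
    have hik : i - t < k := by omega
    rw [wordExt]
    rw [dif_pos hik]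
    have := h ⟨i - t, hik⟩
    simpa [Nat.add_sub_cancel' h1] using this
  · intro h j
    have hj : (t + (j : ℕ)) - t < k := by simpa using j.is_lt
    have := h (t + (j : ℕ)) ⟨by omega, by omega⟩
    rw [wordExt, dif_pos hj] at this
    simpa using this

lemma cylSet_measurableSet {k : ℕ} (t : ℕ) (b : Fin k → Fin 10) :
    MeasurableSet (cylSet t b) := by
  have : cylSet t b = ⋂ j : Fin k, (fun a : ℕ → Fin 10 => a (t + j)) ⁻¹' {b j} := by
    ext a; simp [cylSet]
  rw [this]
  exact MeasurableSet.iInter fun j => (measurable_pi_apply _) (measurableSet_singleton _)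

lemma wordExt_add {k : ℕ} (t : ℕ) (b : Fin k → Fin 10) {j : ℕ} (hj : j < k) :
    wordExt t b (t + j) = b ⟨j, hj⟩ := by
  simp [wordExt, Nat.add_sub_cancel_left, hj]

lemma wordExt_zero {k : ℕ} (b : Fin k → Fin 10) {j : ℕ} (hj : j < k) :
    wordExt 0 b j = b ⟨j, hj⟩ := by
  simp [wordExt, hj]

lemma cylSet_measure (ρ : Measure (Fin 10)) [IsProbabilityMeasure ρ]
    (μ : Measure (ℕ → Fin 10))
    (hμ : ∀ n : ℕ, Measure.map (fun w (i : Fin n) => w (i : ℕ)) μ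
        = Measure.pi (fun _ : Fin n => ρ))
    {k : ℕ} (t : ℕ) (b : Fin k → Fin 10) :
    μ (cylSet t b) = ∏ j : Fin k, ρ {b j} := by
  rw [cylSet_eq, cylinder_meas ρ μ hμ, Finset.prod_Ico_eq_prod_range]
  simp only [Nat.add_sub_cancel_left]
  have h1 : ∏ j : Fin k, ρ {b j} = ∏ j : Fin k, ρ {wordExt 0 b (j : ℕ)} := by
    apply Fintype.prod_congr
    intro j
    rw [wordExt_zero b j.is_lt, Fin.eta]
  rw [h1, Fin.prod_univ_eq_prod_range (fun j => ρ {wordExt 0 b j}) k]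
  apply Finset.prod_congr rfl
  intro j hj
  have hjk : j < k := Finset.mem_range.1 hj
  rw [wordExt_add t b hjk, wordExt_zero b hjk]

lemma cylSet_inter_measure (ρ : Measure (Fin 10)) [IsProbabilityMeasure ρ]
    (μ : Measure (ℕ → Fin 10))
    (hμ : ∀ n : ℕ, Measure.map (fun w (i : Fin n) => w (i : ℕ)) μ
        = Measure.pi (fun _ : Fin n => ρ))
    {k : ℕ} (t t' : ℕ) (htt' : t + k ≤ t') (b b' : Fin k → Fin 10) :
    μ (cylSet t b ∩ cylSet t' b') = μ (cylSet t b) * μ (cylSet t' b') := by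
  set m : ℕ → Fin 10 := fun i => if i < t + k then wordExt t b i else wordExt t' b' i with hm
  have hdisj : Disjoint (Finset.Ico t (t + k)) (Finset.Ico t' (t' + k)) := by
    rw [Finset.disjoint_left]
    intro i hi hi'
    rw [Finset.mem_Ico] at hi hi'
    omega
  have hset : cylSet t b ∩ cylSet t' b'
      = {a | ∀ i ∈ Finset.Ico t (t + k) ∪ Finset.Ico t' (t' + k), a i = m i} := by
    rw [cylSet_eq, cylSet_eq]
    ext a
    simp only [Set.mem_inter_iff, Set.mem_setOf_eq, Finset.mem_union]
    constructor
    · rintro ⟨h1, h2⟩ i (hi | hi)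
      · have : i < t + k := (Finset.mem_Ico.1 hi).2
        simp only [hm]
        rw [if_pos this]; exact h1 i hi
      · have : ¬ i < t + k := by have := (Finset.mem_Ico.1 hi).1; omega
        simp only [hm]
        rw [if_neg this]; exact h2 i hi
    · intro h
      constructor
      · intro i hi
        have hlt : i < t + k := (Finset.mem_Ico.1 hi).2
        have := h i (Or.inl hi)
        simp only [hm] at this; rwa [if_pos hlt] at this
      · intro i hi
        have hlt : ¬ i < t + k := by have := (Finset.mem_Ico.1 hi).1; omega
        have := h i (Or.inr hi)
        simp only [hm] at this; rwa [if_neg hlt] at this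
  rw [hset, cylinder_meas ρ μ hμ, Finset.prod_union hdisj,
    cylSet_eq, cylSet_eq, cylinder_meas ρ μ hμ, cylinder_meas ρ μ hμ]
  congr 1
  · apply Finset.prod_congr rfl
    intro i hi
    have : i < t + k := (Finset.mem_Ico.1 hi).2
    simp only [hm]; simp [this]
  · apply Finset.prod_congr rfl
    intro i hi
    have : ¬ i < t + k := by have := (Finset.mem_Ico.1 hi).1; omega
    simp only [hm]; simp [this]

def blockProj (k t : ℕ) : (ℕ → Fin 10) → (Fin k → Fin 10) := fun a j => a (t + j)

lemma measurable_blockProj (k t : ℕ) : Measurable (blockProj k t) :=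
  measurable_pi_lambda _ fun j => measurable_pi_apply _

lemma blockProj_preimage_singleton (k t : ℕ) (c : Fin k → Fin 10) :
    blockProj k t ⁻¹' {c} = cylSet t c := by
  ext a
  simp [blockProj, cylSet, funext_iff]

lemma map_blockProj (ρ : Measure (Fin 10)) [IsProbabilityMeasure ρ]
    (μ : Measure (ℕ → Fin 10))
    (hμ : ∀ n : ℕ, Measure.map (fun w (i : Fin n) => w (i : ℕ)) μ
        = Measure.pi (fun _ : Fin n => ρ))
    (k t : ℕ) :
    μ.map (blockProj k t) = Measure.pi (fun _ : Fin k => ρ) := by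
  rw [MeasureTheory.Measure.ext_iff_singleton]
  intro c
  rw [Measure.map_apply (measurable_blockProj k t) (measurableSet_singleton _),
    blockProj_preimage_singleton, cylSet_measure ρ μ hμ, ← Set.univ_pi_singleton,
    Measure.pi_pi]

lemma indepFun_blockProj (ρ : Measure (Fin 10)) [IsProbabilityMeasure ρ]
    (μ : Measure (ℕ → Fin 10)) [IsProbabilityMeasure μ]
    (hμ : ∀ n : ℕ, Measure.map (fun w (i : Fin n) => w (i : ℕ)) μ
        = Measure.pi (fun _ : Fin n => ρ))
    (k t t' : ℕ) (htt' : t + k ≤ t') :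
    ProbabilityTheory.IndepFun (blockProj k t) (blockProj k t') μ := by
  rw [ProbabilityTheory.indepFun_iff_map_prod_eq_prod_map_map
    (measurable_blockProj k t).aemeasurable (measurable_blockProj k t').aemeasurable]
  rw [MeasureTheory.Measure.ext_iff_singleton]
  rintro ⟨c, d⟩
  have h1 : ({(c, d)} : Set ((Fin k → Fin 10) × (Fin k → Fin 10))) = {c} ×ˢ {d} := by
    simp
  rw [Measure.map_apply ((measurable_blockProj k t).prodMk (measurable_blockProj k t'))
      (measurableSet_singleton _), h1, Measure.prod_prod,
    Measure.map_apply (measurable_blockProj k t) (measurableSet_singleton _),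
    Measure.map_apply (measurable_blockProj k t') (measurableSet_singleton _),
    blockProj_preimage_singleton, blockProj_preimage_singleton]
  have h2 : (fun ω => (blockProj k t ω, blockProj k t' ω)) ⁻¹' ({c} ×ˢ {d})
      = cylSet t c ∩ cylSet t' d := by
    ext a
    simp [blockProj_preimage_singleton, cylSet, blockProj, funext_iff]
  rw [h2, cylSet_inter_measure ρ μ hμ t t' htt']

noncomputable def wordInd {k : ℕ} (b : Fin k → Fin 10) : (Fin k → Fin 10) → ℝ :=
  fun v => if v = b then 1 else 0

lemma measurable_wordInd {k : ℕ} (b : Fin k → Fin 10) : Measurable (wordInd b) :=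
  measurable_of_countable _

lemma wordInd_comp_blockProj {k t : ℕ} (b : Fin k → Fin 10) (a : ℕ → Fin 10) :
    wordInd b (blockProj k t a) = if a ∈ cylSet t b then 1 else 0 := by
  have : blockProj k t a = b ↔ a ∈ cylSet t b := by
    simp [blockProj, cylSet, funext_iff]
  simp only [wordInd]
  by_cases h : a ∈ cylSet t b
  · rw [if_pos (this.2 h), if_pos h]
  · rw [if_neg (fun hh => h (this.1 hh)), if_neg h]

lemma class_slln (ρ : Measure (Fin 10)) [IsProbabilityMeasure ρ]
    (μ : Measure (ℕ → Fin 10)) [IsProbabilityMeasure μ]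
    (hμ : ∀ n : ℕ, Measure.map (fun w (i : Fin n) => w (i : ℕ)) μ
        = Measure.pi (fun _ : Fin n => ρ))
    (k r : ℕ) (hk : 1 ≤ k) (b : Fin k → Fin 10) :
    ∀ᵐ a ∂μ, Tendsto
      (fun M : ℕ => (∑ m ∈ Finset.range M,
          (if a ∈ cylSet (r + m * k) b then (1:ℝ) else 0)) / M)
      atTop (𝓝 (∏ j : Fin k, (ρ {b j}).toReal)) := by
  set X : ℕ → (ℕ → Fin 10) → ℝ := fun m => wordInd b ∘ blockProj k (r + m * k) with hX
  have hXm : ∀ m, Measurable (X m) :=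
    fun m => (measurable_wordInd b).comp (measurable_blockProj _ _)
  have hXind : ∀ m, X m = Set.indicator (cylSet (r + m * k) b) (fun _ => (1:ℝ)) := by
    intro m
    funext a
    rw [hX]
    simp only [Function.comp_apply, wordInd_comp_blockProj, Set.indicator_apply]
  have hint : Integrable (X 0) μ := by
    rw [hXind 0]
    exact (integrable_const (1:ℝ)).indicator (cylSet_measurableSet _ _)
  have hindep : Pairwise (Function.onFun (ProbabilityTheory.IndepFun · · μ) X) := by
    have key : ∀ m m' : ℕ, m < m' → ProbabilityTheory.IndepFun (X m) (X m') μ := by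
      intro m m' hmm'
      refine (indepFun_blockProj ρ μ hμ k (r + m * k) (r + m' * k) ?_).comp
        (measurable_wordInd b) (measurable_wordInd b)
      have : m * k + k ≤ m' * k := by
        calc m * k + k = (m + 1) * k := by ring
        _ ≤ m' * k := Nat.mul_le_mul_right k hmm'
      omega
    intro m m' hne
    rcases lt_or_gt_of_ne hne with h | h
    · exact key m m' h
    · exact (key m' m h).symm
  have hident : ∀ m, ProbabilityTheory.IdentDistrib (X m) (X 0) μ μ := by
    intro m
    have hbp : ProbabilityTheory.IdentDistrib (blockProj k (r + m * k))
        (blockProj k (r + 0 * k)) μ μ :=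
      ⟨(measurable_blockProj _ _).aemeasurable, (measurable_blockProj _ _).aemeasurable, by
        rw [map_blockProj ρ μ hμ, map_blockProj ρ μ hμ]⟩
    exact hbp.comp (measurable_wordInd b)
  have hE : (∫ a, X 0 a ∂μ) = ∏ j : Fin k, (ρ {b j}).toReal := by
    rw [hXind 0]
    rw [integral_indicator_const (1:ℝ) (cylSet_measurableSet _ _)]
    rw [smul_eq_mul, mul_one, measureReal_def, cylSet_measure ρ μ hμ]
    rw [ENNReal.toReal_prod]
  have := ProbabilityTheory.strong_law_ae_real X hint hindep hident
  rw [hE] at this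
  filter_upwards [this] with a ha
  convert ha using 2 with M
  congr 1
  apply Finset.sum_congr rfl
  intro m _
  rw [hX]
  simp only [Function.comp_apply, wordInd_comp_blockProj]

lemma freq_of_class_freq {x : ℕ → ℝ} (hx0 : ∀ i, 0 ≤ x i) (hx1 : ∀ i, x i ≤ 1)
    {k : ℕ} (hk : 1 ≤ k) {p : ℝ}
    (h : ∀ r, r < k → Tendsto (fun M : ℕ => (∑ m ∈ Finset.range M, x (r + m * k)) / M)
      atTop (𝓝 p)) :
    Tendsto (fun n : ℕ => (∑ i ∈ Finset.range n, x i) / n) atTop (𝓝 p) := by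
  have hkR : (0:ℝ) < k := by exact_mod_cast hk
  set S : ℕ → ℝ := fun n => ∑ i ∈ Finset.range n, x i with hS
  have hSnonneg : ∀ n, 0 ≤ S n := fun n => Finset.sum_nonneg fun i _ => hx0 i
  have hSmono : Monotone S := fun m n hmn =>
    Finset.sum_le_sum_of_subset_of_nonneg (Finset.range_subset_range.2 hmn) fun i _ _ => hx0 i
  have hT : ∀ M : ℕ, S (M * k) = ∑ r ∈ Finset.range k, ∑ m ∈ Finset.range M, x (r + m * k) := by
    intro M
    induction M with
    | zero => simp [hS]
    | succ M ih =>
      have hmul : (M + 1) * k = M * k + k := by ring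
      have h1 : S ((M + 1) * k) = S (M * k) + ∑ r ∈ Finset.range k, x (M * k + r) := by
        rw [hS]
        simp only [Finset.range_eq_Ico]
        rw [← Finset.sum_Ico_consecutive x (Nat.zero_le (M * k))
          (by rw [hmul]; omega : M * k ≤ (M + 1) * k)]
        congr 1
        rw [Finset.sum_Ico_eq_sum_range]
        rw [hmul]
        simp only [Nat.add_sub_cancel_left]
        rw [Finset.range_eq_Ico]
      rw [h1, ih]
      rw [← Finset.sum_add_distrib]
      apply Finset.sum_congr rfl
      intro r _
      rw [Finset.sum_range_succ]
      congr 1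
      rw [add_comm (M * k) r]
  -- limit of T M / (M * k)
  have hTlim : Tendsto (fun M : ℕ => S (M * k) / (M * k : ℝ)) atTop (𝓝 p) := by
    have hsum : Tendsto (fun M : ℕ => ∑ r ∈ Finset.range k,
        ((∑ m ∈ Finset.range M, x (r + m * k)) / M)) atTop (𝓝 (∑ _r ∈ Finset.range k, p)) := by
      apply tendsto_finset_sum
      intro r hr
      exact h r (Finset.mem_range.1 hr)
    have heq : ∀ M : ℕ, S (M * k) / (M * k : ℝ)
        = (∑ r ∈ Finset.range k, ((∑ m ∈ Finset.range M, x (r + m * k)) / M)) / k := by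
      intro M
      rw [hT M, ← Finset.sum_div, div_div]
    simp only [heq]
    have := hsum.div_const (k : ℝ)
    rwa [Finset.sum_const, Finset.card_range, nsmul_eq_mul, mul_comm,
      mul_div_assoc, div_self (ne_of_gt hkR), mul_one] at this
  -- shifted limits
  have hplus : Tendsto (fun M : ℕ => ((M : ℝ) + 1) / M) atTop (𝓝 1) := by
    have h0 : Tendsto (fun M : ℕ => 1 + 1 / (M : ℝ)) atTop (𝓝 (1 + 0)) :=
      tendsto_const_nhds.add tendsto_one_div_atTop_nhds_zero_nat
    rw [add_zero] at h0
    apply h0.congr'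
    filter_upwards [eventually_ge_atTop 1] with M hM
    have hM0 : (M : ℝ) ≠ 0 := by
      have : (0:ℕ) < M := hM
      exact_mod_cast this.ne'
    field_simp
  have hminus : Tendsto (fun M : ℕ => (M : ℝ) / (M + 1)) atTop (𝓝 1) :=
    tendsto_natCast_div_add_atTop (1 : ℝ)
  -- upper comparison sequence
  have hup : Tendsto (fun M : ℕ => S ((M + 1) * k) / ((M : ℝ) * k)) atTop (𝓝 p) := by
    have h1 : Tendsto (fun M : ℕ => S ((M + 1) * k) / (((M : ℝ) + 1) * k)) atTop (𝓝 p) := by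
      have h2 := hTlim.comp (tendsto_add_atTop_nat 1)
      simp only [Function.comp_def] at h2
      apply h2.congr
      intro M
      norm_cast
    have h2 := h1.mul hplus
    rw [mul_one] at h2
    apply h2.congr'
    filter_upwards [eventually_ge_atTop 1] with M hM
    have hM0 : (M : ℝ) ≠ 0 := by
      have : (0:ℕ) < M := hM
      exact_mod_cast this.ne'
    have hM1 : (M : ℝ) + 1 ≠ 0 := by positivity
    field_simp
  -- lower comparison sequence
  have hlow : Tendsto (fun M : ℕ => S (M * k) / (((M : ℝ) + 1) * k)) atTop (𝓝 p) := by
    have h2 := hTlim.mul hminus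
    rw [mul_one] at h2
    apply h2.congr'
    filter_upwards [eventually_ge_atTop 1] with M hM
    have hM0 : (M : ℝ) ≠ 0 := by
      have : (0:ℕ) < M := hM
      exact_mod_cast this.ne'
    have hM1 : (M : ℝ) + 1 ≠ 0 := by positivity
    field_simp
  -- the floor map tends to infinity
  have hdiv : Tendsto (fun n : ℕ => n / k) atTop atTop := by
    apply tendsto_atTop_atTop.2
    intro b
    refine ⟨b * k, fun n hn => ?_⟩
    exact (Nat.le_div_iff_mul_le (by omega)).2 hn
  -- squeeze
  have hlow' := hlow.comp hdiv
  have hup' := hup.comp hdiv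
  simp only [Function.comp_def] at hlow' hup'
  apply tendsto_of_tendsto_of_tendsto_of_le_of_le' hlow' hup'
  · filter_upwards [eventually_ge_atTop k] with n hn
    have hMk : (n / k) * k ≤ n := Nat.div_mul_le_self n k
    have hn0 : (0:ℝ) < n := by
      have : 0 < n := by omega
      exact_mod_cast this
    have hnlt : n < (n / k + 1) * k :=
      (Nat.div_lt_iff_lt_mul (by omega : 0 < k)).1 (Nat.lt_succ_self _)
    have hnle : (n : ℝ) ≤ ((n / k : ℕ) + 1) * k := by exact_mod_cast hnlt.le
    apply div_le_div₀ (hSnonneg n) (hSmono hMk) hn0 hnle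
  · filter_upwards [eventually_ge_atTop k] with n hn
    have hM1 : 1 ≤ n / k := (Nat.one_le_div_iff (by omega)).2 hn
    have hMk : (n / k) * k ≤ n := Nat.div_mul_le_self n k
    have hMkR : (0:ℝ) < (n / k : ℕ) * k := by
      have h0 : 0 < (n / k) * k := Nat.mul_pos hM1 (by omega)
      exact_mod_cast h0
    have hnlt : n < (n / k + 1) * k :=
      (Nat.div_lt_iff_lt_mul (by omega : 0 < k)).1 (Nat.lt_succ_self _)
    have hle : S n ≤ S ((n / k + 1) * k) := hSmono hnlt.le
    have hMkn : ((n / k : ℕ) : ℝ) * k ≤ n := by exact_mod_cast hMk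
    apply div_le_div₀ (hSnonneg _) hle hMkR hMkn

lemma ae_infinite_lt_nine (ρ : Measure (Fin 10)) [IsProbabilityMeasure ρ] (hρ : ρ {9} < 1)
    (μ : Measure (ℕ → Fin 10)) [IsProbabilityMeasure μ]
    (hμ : ∀ n : ℕ, Measure.map (fun w (i : Fin n) => w (i : ℕ)) μ
        = Measure.pi (fun _ : Fin n => ρ)) :
    ∀ᵐ a ∂μ, {j : ℕ | (a j : ℕ) < 9}.Infinite := by
  rw [ae_iff]
  apply measure_mono_null (t := ⋃ m : ℕ, {a : ℕ → Fin 10 | ∀ j, m ≤ j → a j = 9})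
  · intro a ha
    simp only [Set.mem_setOf_eq] at ha
    rw [Set.not_infinite] at ha
    rcases ha.bddAbove with ⟨m, hm⟩
    refine Set.mem_iUnion.2 ⟨m + 1, fun j hj => ?_⟩
    have hj9 : ¬ (a j : ℕ) < 9 := fun hlt => by
      have : j ≤ m := hm hlt
      omega
    have : (a j : ℕ) = 9 := by
      have := (a j).is_lt
      omega
    exact Fin.ext (by simpa using this)
  · apply measure_iUnion_null
    intro m
    have hle : ∀ L : ℕ, μ {a : ℕ → Fin 10 | ∀ j, m ≤ j → a j = 9} ≤ ρ {9} ^ L := by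
      intro L
      have hsub : {a : ℕ → Fin 10 | ∀ j, m ≤ j → a j = 9}
          ⊆ cylSet m (fun _ : Fin L => 9) := by
        intro a ha j
        exact ha (m + j) (by omega)
      calc μ {a : ℕ → Fin 10 | ∀ j, m ≤ j → a j = 9} ≤ μ (cylSet m (fun _ : Fin L => 9)) :=
            measure_mono hsub
        _ = ∏ _j : Fin L, ρ {9} := cylSet_measure ρ μ hμ m _
        _ = ρ {9} ^ L := by simp
    have h0 : Tendsto (fun L : ℕ => ρ {9} ^ L) atTop (𝓝 0) :=
      ENNReal.tendsto_pow_atTop_nhds_zero_of_lt_one hρ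
    exact le_antisymm (ge_of_tendsto h0 (Eventually.of_forall hle)) zero_le

lemma summable_Psi (a : ℕ → Fin 10) : Summable (fun j : ℕ => (a j : ℝ) / 10 ^ (j + 1)) := by
  refine Summable.of_nonneg_of_le (f := fun j : ℕ => 9 * (1 / 10 : ℝ) ^ (j + 1))
    (fun j => div_nonneg (Nat.cast_nonneg _) (by positivity)) (fun j => ?_) ?_
  · 
    have h9 : (a j : ℝ) ≤ 9 := by
      have := (a j).is_lt
      exact_mod_cast Nat.lt_succ_iff.1 this
    rw [div_eq_mul_inv, ← inv_pow]
    have : ((10:ℝ))⁻¹ ^ (j+1) = (1/10:ℝ)^(j+1) := by norm_num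
    rw [this]
    apply mul_le_mul_of_nonneg_right h9 (by positivity)
  · apply Summable.mul_left
    have hgeo : Summable (fun j : ℕ => (1/10:ℝ)^j) :=
      summable_geometric_of_lt_one (by norm_num) (by norm_num)
    exact (hgeo.mul_right (1/10:ℝ)).congr fun j => by rw [← pow_succ]

lemma measurable_Psi : Measurable Psi := by
  have hg : ∀ N : ℕ, Measurable (fun a : ℕ → Fin 10 =>
      ∑ j ∈ Finset.range N, (a j : ℝ) / 10 ^ (j + 1)) := by
    intro N
    apply Finset.measurable_sum
    intro j _
    exact ((measurable_of_countable (fun v : Fin 10 => (v : ℝ))).comp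
      (measurable_pi_apply j)).div_const _
  unfold Psi
  apply measurable_of_tendsto_metrizable hg
  rw [tendsto_pi_nhds]
  intro a
  exact (summable_Psi a).hasSum.tendsto_sum_nat

/-- if `ρ` is a probability measure on `Ω = {0,…,9}` with `ρ {9} < 1`,
`μ_ρ = ⊗ρ` is the infinite product measure on `Ω^ℕ` (characterized by its
finite-dimensional marginals) and `λ_{μ_ρ} = Ψ_*(μ_ρ)`, then the set of numbers in
`[0,1]` that are normal with respect to `λ_{μ_ρ}` has `λ_{μ_ρ}`-measure `1`. -/
theorem normalSet_measure_one
    (ρ : Measure (Fin 10)) [IsProbabilityMeasure ρ] (hρ : ρ {9} < 1)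
    (μ : Measure (ℕ → Fin 10)) [IsProbabilityMeasure μ]
    (hμ : ∀ n : ℕ, Measure.map (fun w (i : Fin n) => w (i : ℕ)) μ
        = Measure.pi (fun _ : Fin n => ρ)) :
    Measure.map Psi μ (NormalSet ρ) = 1 := by
  have hPsi : Measurable Psi := measurable_Psi
  have h2 : ∀ᵐ a ∂μ, ∀ (k : ℕ) (b : Fin k → Fin 10), 1 ≤ k →
      Tendsto (fun n : ℕ =>
          (({i | i < n ∧ ∀ j : Fin k, a (i + j) = b j} : Set ℕ).ncard : ℝ) / n)
        atTop (𝓝 (∏ j : Fin k, (ρ {b j}).toReal)) := by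
    rw [ae_all_iff]
    intro k
    rw [ae_all_iff]
    intro b
    by_cases hk : 1 ≤ k
    · have hcl : ∀ᵐ a ∂μ, ∀ r : ℕ, Tendsto (fun M : ℕ =>
          (∑ m ∈ Finset.range M, (if a ∈ cylSet (r + m * k) b then (1:ℝ) else 0)) / M)
          atTop (𝓝 (∏ j : Fin k, (ρ {b j}).toReal)) := by
        rw [ae_all_iff]
        intro r
        exact class_slln ρ μ hμ k r hk b
      filter_upwards [hcl] with a ha _
      have key := freq_of_class_freq (x := fun i => if a ∈ cylSet i b then (1:ℝ) else 0)
        (fun i => by split_ifs <;> norm_num)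
        (fun i => by split_ifs <;> norm_num) hk
        (fun r _ => ha r)
      apply key.congr
      intro n
      congr 1
      have hseteq : ({i | i < n ∧ ∀ j : Fin k, a (i + j) = b j} : Set ℕ)
          = ↑((Finset.range n).filter (fun i => a ∈ cylSet i b)) := by
        ext i
        rw [Finset.mem_coe, Finset.mem_filter, Finset.mem_range]; rfl
      rw [hseteq, Set.ncard_coe_finset, Finset.card_filter, Nat.cast_sum]
      exact (Finset.sum_congr rfl (fun i _ => by by_cases h : a ∈ cylSet i b <;> simp [h])).symm
    · exact ae_of_all _ (fun a hk' => absurd hk' hk)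
  have h1 := ae_infinite_lt_nine ρ hρ μ hμ
  have hae : ∀ᵐ a ∂μ, Psi a ∈ NormalSet ρ := by
    filter_upwards [h1, h2] with a hinf hfreq
    exact ⟨a, rfl, hinf, hfreq⟩
  have hcompl : μ ((Psi ⁻¹' NormalSet ρ)ᶜ) = 0 := by
    rw [ae_iff] at hae
    exact hae
  have hpre : (1:ENNReal) ≤ μ (Psi ⁻¹' NormalSet ρ) := by
    have hu : (Set.univ : Set (ℕ → Fin 10))
        = (Psi ⁻¹' NormalSet ρ) ∪ (Psi ⁻¹' NormalSet ρ)ᶜ := by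
      rw [Set.union_compl_self]
    calc (1:ENNReal) = μ Set.univ := (measure_univ).symm
      _ ≤ μ (Psi ⁻¹' NormalSet ρ) + μ ((Psi ⁻¹' NormalSet ρ)ᶜ) := by
          rw [hu]; exact measure_union_le _ _
      _ = μ (Psi ⁻¹' NormalSet ρ) := by rw [hcompl, add_zero]
  have hmapprob : IsProbabilityMeasure (μ.map Psi) :=
    Measure.isProbabilityMeasure_map hPsi.aemeasurable
  refine le_antisymm prob_le_one ?_
  exact le_trans hpre (le_trans (Measure.le_map_apply hPsi.aemeasurable _) le_rfl)
end
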